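/- arXiv:2005.06713 — 4 statements merged into one kernel-verified Lean document; each statement's English description precedes it below -/
import Mathlib

section
/- Let (F_n)_{n=0}^∞ be an infinite sequence of rational functions F_n ∈ ℂ(X) and let K ≥ 1. Assume there exist infinitely many α ∈ ℂ such that each F_n(α) is well defined and the sequence (F_n(α))_{n=0}^∞ is a linear recurrence sequence over ℂ of order at most K. Then (F_n)_{n=0}^∞ is a linear recurrence sequence over ℂ(X) of order at most K. -/
open Polynomial

noncomputable section

/-- `z` is a root of unity. -/
def IsRootOfUnity (z : ℂ) : Prop := ∃ n : ℕ, 0 < n ∧ z ^ n = 1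

/-- The degree of a rational function. -/
def ratDeg (f : RatFunc ℂ) : ℕ := max f.num.natDegree f.denom.natDegree

/-- A polynomial over `ℂ` has all coefficients algebraic over `ℚ`,
i.e. it is a polynomial over `ℚ̄`. -/
def Polynomial.AlgCoeffs (p : Polynomial ℂ) : Prop := ∀ n, IsAlgebraic ℚ (p.coeff n)

/-- A rational function over `ℂ` is defined over `ℚ̄`. -/
def RatFunc.AlgCoeffs (f : RatFunc ℂ) : Prop :=
  f.num.AlgCoeffs ∧ f.denom.AlgCoeffs

/-- A finite Blaschke product. -/
def IsFiniteBlaschke (B : RatFunc ℂ) : Prop :=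
  ∃ (ζ : ℂ) (n : ℕ) (a : Fin n → ℂ) (m : Fin n → ℕ),
    ‖ζ‖ = 1 ∧ (∀ i, ‖a i‖ < 1) ∧ (∀ i, 0 < m i) ∧
    B = RatFunc.C ζ *
      ∏ i, ((RatFunc.X - RatFunc.C (a i)) /
            (1 - RatFunc.C ((starRingEnd ℂ) (a i)) * RatFunc.X)) ^ m i

/-- A quotient of finite Blaschke products. -/
def IsBlaschkeQuotient (Q : RatFunc ℂ) : Prop :=
  ∃ B₁ B₂ : RatFunc ℂ, IsFiniteBlaschke B₁ ∧ IsFiniteBlaschke B₂ ∧ Q = B₁ / B₂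

/-- Composition `p ∘ q` of rational functions. -/
def ratComp (p q : RatFunc ℂ) : RatFunc ℂ :=
  RatFunc.eval (algebraMap ℂ (RatFunc ℂ)) q p

/-- A pair of rational functions is exceptional if both components can be
decomposed through a common rational function via quotients of finite Blaschke
products. -/
def IsExceptionalPair (g₁ g₂ : RatFunc ℂ) : Prop :=
  ∃ Q₁ Q₂ g : RatFunc ℂ, IsBlaschkeQuotient Q₁ ∧ IsBlaschkeQuotient Q₂ ∧
    g₁ = ratComp Q₁ g ∧ g₂ = ratComp Q₂ g

/-- Evaluation of a rational function at a complex point. -/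
def ratEval (f : RatFunc ℂ) (α : ℂ) : ℂ := RatFunc.eval (RingHom.id ℂ) α f

/-- The exceptional set `𝔈_{𝐚,𝐟}` for a family of rational functions. -/
def exceptionalSetR {k : ℕ} (a f : Fin k → RatFunc ℂ) : Set ℂ :=
  {α | (∃ i j : Fin k, i < j ∧ IsRootOfUnity (ratEval (f i) α / ratEval (f j) α)) ∨
    ∃ i : Fin k, ratEval (a i) α = 0 ∨ ratEval (f i) α = 0}

/-- The exceptional set `𝔈_{𝐚,𝐟}` for a family of polynomials. -/
def exceptionalSetP {k : ℕ} (a f : Fin k → Polynomial ℂ) : Set ℂ :=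
  {α | (∃ i j : Fin k, i < j ∧ IsRootOfUnity ((f i).eval α / (f j).eval α)) ∨
    ∃ i : Fin k, (a i).eval α = 0 ∨ (f i).eval α = 0}

/-- The degree of the Galois closure of `ℚ(α)` over `ℚ`. -/
def galDeg (α : ℂ) : ℕ :=
  Module.finrank ℚ
    (IntermediateField.normalClosure ℚ (IntermediateField.adjoin ℚ ({α} : Set ℂ)) ℂ)

/-- A primitive integer polynomial associated with the minimal polynomial of `α`. -/
def intMinpoly (α : ℂ) : Polynomial ℤ :=
  (IsLocalization.integerNormalization (nonZeroDivisors ℤ) (minpoly ℚ α)).primPart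

/-- The absolute logarithmic Weil height of an algebraic number `α`,
expressed via the Mahler measure of its primitive integer minimal polynomial. -/
def weilHeight (α : ℂ) : ℝ :=
  (1 / ((minpoly ℚ α).natDegree : ℝ)) *
    Real.log ((|(intMinpoly α).leadingCoeff| : ℝ) *
      ((((intMinpoly α).map (Int.castRingHom ℂ)).roots.map fun z => max 1 ‖z‖).prod))

/-- The division group `Γ^div` of a subgroup `Γ ⊆ ℚ̄*`. -/
def divGroup (Γ : Subgroup ℂˣ) : Set ℂ :=
  {α | IsAlgebraic ℚ α ∧ ∃ n : ℕ, 1 ≤ n ∧ ∃ u ∈ Γ, ((u : ℂˣ) : ℂ) = α ^ n}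

/-- Rational functions multiplicatively independent modulo a set `S ⊆ ℂ`. -/
def MultIndepModulo {t : ℕ} (S : Set ℂ) (ψ : Fin t → RatFunc ℂ) : Prop :=
  ∀ h : Fin t → ℤ, h ≠ 0 → ∀ c ∈ S, (∏ i, ψ i ^ h i) ≠ RatFunc.C c

/-- A sequence over a commutative ring is a linear recurrence sequence of order at most `K`. -/
def IsLinRecOfOrderLE {R : Type*} [CommRing R] (u : ℕ → R) (K : ℕ) : Prop :=
  ∃ k ≤ K, ∃ A : Fin k → R, ∀ n, u (n + k) = ∑ i : Fin k, A i * u (n + i)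

private lemma aux_denom_sum_dvd {ι : Type*} (s : Finset ι) (f : ι → RatFunc ℂ) :
    (∑ i ∈ s, f i).denom ∣ ∏ i ∈ s, (f i).denom := by
  classical
  induction s using Finset.cons_induction with
  | empty => simp
  | cons a s ha ih =>
    rw [Finset.sum_cons, Finset.prod_cons]
    exact (RatFunc.denom_add_dvd _ _).trans (mul_dvd_mul dvd_rfl ih)

private lemma aux_eval₂_id (p : Polynomial ℂ) (α : ℂ) :
    Polynomial.eval₂ (RingHom.id ℂ) α p = p.eval α := rfl

private lemma aux_ratEval_sum {ι : Type*} (s : Finset ι) (f : ι → RatFunc ℂ) (α : ℂ)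
    (h : ∀ i ∈ s, (f i).denom.eval α ≠ 0) :
    ratEval (∑ i ∈ s, f i) α = ∑ i ∈ s, ratEval (f i) α := by
  classical
  induction s using Finset.cons_induction with
  | empty => simp [ratEval]
  | cons a s ha ih =>
    have hs : (∑ i ∈ s, f i).denom.eval α ≠ 0 := by
      intro h0
      obtain ⟨e, he⟩ := aux_denom_sum_dvd s f
      have h1 : (∏ i ∈ s, (f i).denom).eval α = 0 := by
        rw [he, Polynomial.eval_mul, h0, zero_mul]
      rw [Polynomial.eval_prod] at h1
      obtain ⟨i, hi, h2⟩ := Finset.prod_eq_zero_iff.mp h1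
      exact h i (Finset.mem_cons_of_mem hi) h2
    rw [Finset.sum_cons, Finset.sum_cons,
      ← ih (fun i hi => h i (Finset.mem_cons_of_mem hi))]
    exact RatFunc.eval_add (RingHom.id ℂ) α (h a (Finset.mem_cons_self a s)) hs

private lemma aux_ratEval_mul (x y : RatFunc ℂ) (α : ℂ)
    (hx : x.denom.eval α ≠ 0) (hy : y.denom.eval α ≠ 0) :
    ratEval (x * y) α = ratEval x α * ratEval y α :=
  RatFunc.eval_mul (RingHom.id ℂ) α hx hy

private lemma aux_ratEval_ne_zero (g : RatFunc ℂ) (α : ℂ)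
    (hnum : g.num.eval α ≠ 0) (hden : g.denom.eval α ≠ 0) :
    ratEval g α ≠ 0 := by
  have : ratEval g α = g.num.eval α / g.denom.eval α := rfl
  rw [this]
  exact div_ne_zero hnum hden

/-- Padding a linear recurrence of order `k ≤ K` to one of order exactly `K`. -/
private lemma aux_pad {u : ℕ → ℂ} {K : ℕ} (hrec : IsLinRecOfOrderLE u K) :
    ∃ b : ℕ → ℂ, ∀ n, u (n + K) = ∑ j ∈ Finset.range K, b j * u (n + j) := by
  obtain ⟨k, hk, A, hA⟩ := hrec
  set A' : ℕ → ℂ := fun i => if h : i < k then A ⟨i, h⟩ else 0 with hA'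
  refine ⟨fun j => if K - k ≤ j then A' (j - (K - k)) else 0, fun n => ?_⟩
  have hsplit : ∑ j ∈ Finset.range K,
        (if K - k ≤ j then A' (j - (K - k)) else 0) * u (n + j)
      = ∑ j ∈ Finset.Ico (K - k) K,
        (if K - k ≤ j then A' (j - (K - k)) else 0) * u (n + j) := by
    rw [Finset.range_eq_Ico,
      ← Finset.sum_Ico_consecutive _ (Nat.zero_le (K - k)) (Nat.sub_le K k)]
    have h0 : ∑ j ∈ Finset.Ico 0 (K - k),
        (if K - k ≤ j then A' (j - (K - k)) else 0) * u (n + j) = 0 := by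
      refine Finset.sum_eq_zero fun j hj => ?_
      have := (Finset.mem_Ico.mp hj).2
      rw [if_neg (by omega), zero_mul]
    rw [h0, zero_add]
  rw [hsplit, Finset.sum_Ico_eq_sum_range]
  have hKk : K - (K - k) = k := by omega
  rw [hKk]
  have hterm : ∀ i, (if K - k ≤ K - k + i then A' (K - k + i - (K - k)) else 0)
      * u (n + (K - k + i)) = A' i * u ((n + (K - k)) + i) := by
    intro i
    rw [if_pos (Nat.le_add_right _ _), Nat.add_sub_cancel_left]
    ring_nf
  simp only [hterm]
  have := hA (n + (K - k))
  have hnk : n + (K - k) + k = n + K := by omega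
  rw [hnk] at this
  rw [this, ← Fin.sum_univ_eq_sum_range (fun i => A' i * u ((n + (K - k)) + i)) k]
  refine Finset.sum_congr rfl fun i _ => ?_
  simp [hA']

set_option maxHeartbeats 1000000
set_option synthInstance.maxHeartbeats 1000000

/-- **Theorem (specialisations of sequences of rational functions).**
If $(F_n)_{n ≥ 0}$ is a sequence of rational functions over $ℂ$ and there are infinitely
many $α ∈ ℂ$ such that every $F_n(α)$ is well defined and $(F_n(α))_{n ≥ 0}$ is a linear
recurrence sequence of order at most $K$, then $(F_n)_{n ≥ 0}$ is a linear recurrence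
sequence over $ℂ(X)$ of order at most $K$. -/
theorem linear_recurrence_from_specialisations
    (F : ℕ → RatFunc ℂ) (K : ℕ) (hK : 1 ≤ K)
    (h : {α : ℂ | (∀ n, (F n).denom.eval α ≠ 0) ∧
      IsLinRecOfOrderLE (fun n => ratEval (F n) α) K}.Infinite) :
    IsLinRecOfOrderLE F K := by
  classical
  -- the "row" vectors (F n, F (n+1), ..., F (n+K)) and their span
  set r : ℕ → (Fin (K + 1) → RatFunc ℂ) := fun n i => F (n + (i : ℕ)) with hr
  set W : Submodule (RatFunc ℂ) (Fin (K + 1) → RatFunc ℂ) :=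
    Submodule.span (RatFunc ℂ) (Set.range r) with hWdef
  -- Key claim: on W, vanishing of the first K coordinates forces the last one to vanish.
  have key : ∀ w ∈ W, (∀ j : Fin K, w j.castSucc = 0) → w (Fin.last K) = 0 := by
    intro w hw hw0
    by_contra hg
    set g : RatFunc ℂ := w (Fin.last K) with hgdef
    obtain ⟨c, hc⟩ := Finsupp.mem_span_range_iff_exists_finsupp.mp hw
    -- the coordinates of w as explicit finite linear combinations
    have hcoord : ∀ i : Fin (K + 1),
        ∑ n ∈ c.support, c n * F (n + (i : ℕ)) = w i := by
      intro i
      rw [← hc, Finsupp.sum, Finset.sum_apply]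
      refine Finset.sum_congr rfl fun n _ => ?_
      rw [Pi.smul_apply, smul_eq_mul]
    -- the finite bad set of specialisation points
    have hbad : ({α : ℂ | g.num.eval α = 0} ∪ {α : ℂ | g.denom.eval α = 0} ∪
        ⋃ n ∈ (c.support : Set ℕ), {α : ℂ | (c n).denom.eval α = 0}).Finite := by
      refine (Set.Finite.union (Set.Finite.union ?_ ?_) ?_)
      · exact Polynomial.finite_setOf_isRoot (RatFunc.num_ne_zero hg)
      · exact Polynomial.finite_setOf_isRoot (RatFunc.denom_ne_zero g)
      · refine Set.Finite.biUnion (c.support.finite_toSet) fun n _ => ?_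
        exact Polynomial.finite_setOf_isRoot (RatFunc.denom_ne_zero (c n))
    obtain ⟨α, hαmem⟩ := (h.diff hbad).nonempty
    obtain ⟨⟨hden, hrec⟩, hnotbad⟩ := hαmem
    have hgnum : g.num.eval α ≠ 0 := fun h0 =>
      hnotbad (Or.inl (Or.inl h0))
    have hgden : g.denom.eval α ≠ 0 := fun h0 =>
      hnotbad (Or.inl (Or.inr h0))
    have hcden : ∀ n ∈ c.support, (c n).denom.eval α ≠ 0 := by
      intro n hn h0
      exact hnotbad (Or.inr (Set.mem_biUnion hn h0))
    set u : ℕ → ℂ := fun n => ratEval (F n) α with hu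
    -- evaluating each coordinate identity at α
    have hev : ∀ i : Fin (K + 1),
        ∑ n ∈ c.support, ratEval (c n) α * u (n + (i : ℕ)) = ratEval (w i) α := by
      intro i
      rw [← hcoord i,
        aux_ratEval_sum c.support (fun n => c n * F (n + (i : ℕ))) α ?_]
      · refine Finset.sum_congr rfl fun n hn => ?_
        exact (aux_ratEval_mul _ _ _ (hcden n hn) (hden _)).symm
      · intro n hn h0
        have hdvd := RatFunc.denom_mul_dvd (c n) (F (n + (i : ℕ)))
        obtain ⟨e, he⟩ := hdvd
        have : ((c n).denom * (F (n + (i : ℕ))).denom).eval α = 0 := by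
          rw [he, Polynomial.eval_mul, h0, zero_mul]
        rw [Polynomial.eval_mul] at this
        rcases mul_eq_zero.mp this with h1 | h1
        · exact hcden n hn h1
        · exact hden _ h1
    -- the first K evaluated sums vanish
    have hev0 : ∀ j ∈ Finset.range K,
        ∑ n ∈ c.support, ratEval (c n) α * u (n + j) = 0 := by
      intro j hj
      have hjK : j < K := Finset.mem_range.mp hj
      have := hev ((⟨j, hjK⟩ : Fin K).castSucc)
      have hval : (((⟨j, hjK⟩ : Fin K).castSucc : Fin (K + 1)) : ℕ) = j := rfl
      rw [hval, hw0 ⟨j, hjK⟩] at this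
      simpa [ratEval] using this
    -- the last one equals ratEval g α ≠ 0
    have hevK : ∑ n ∈ c.support, ratEval (c n) α * u (n + K) = ratEval g α := by
      have := hev (Fin.last K)
      rwa [Fin.val_last, ← hgdef] at this
    have hgne : ratEval g α ≠ 0 := aux_ratEval_ne_zero g α hgnum hgden
    -- use the linear recurrence at α
    obtain ⟨b, hb⟩ := aux_pad hrec
    have : ratEval g α = 0 := by
      rw [← hevK]
      calc ∑ n ∈ c.support, ratEval (c n) α * u (n + K)
          = ∑ n ∈ c.support, ratEval (c n) α *
              ∑ j ∈ Finset.range K, b j * u (n + j) := by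
            refine Finset.sum_congr rfl fun n _ => ?_
            rw [hb n]
        _ = ∑ j ∈ Finset.range K, b j *
              ∑ n ∈ c.support, ratEval (c n) α * u (n + j) := by
            simp_rw [Finset.mul_sum]
            rw [Finset.sum_comm]
            refine Finset.sum_congr rfl fun j _ => ?_
            refine Finset.sum_congr rfl fun n _ => ?_
            ring
        _ = 0 := by
            refine Finset.sum_eq_zero fun j hj => ?_
            rw [hev0 j hj, mul_zero]
    exact hgne this
  -- linear algebra: the last coordinate on W is a linear function of the first K
  set pW : W →ₗ[RatFunc ℂ] (Fin K → RatFunc ℂ) :=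
    (LinearMap.funLeft (RatFunc ℂ) (RatFunc ℂ) Fin.castSucc).comp W.subtype with hpW
  have hker : LinearMap.ker pW = ⊥ := by
    rw [LinearMap.ker_eq_bot']
    rintro ⟨w, hw⟩ hmw
    have h0 : ∀ j : Fin K, w j.castSucc = 0 := by
      intro j
      have := congrFun hmw j
      simpa [hpW, LinearMap.funLeft] using this
    refine Subtype.ext ?_
    funext i
    refine Fin.lastCases ?_ ?_ i
    · exact key w hw h0
    · exact h0
  obtain ⟨gmap, hgmap⟩ := pW.exists_leftInverse_of_injective hker
  set φ : (Fin K → RatFunc ℂ) →ₗ[RatFunc ℂ] RatFunc ℂ :=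
    ((LinearMap.proj (Fin.last K)).comp W.subtype).comp gmap with hφ
  have hφpW : ∀ x : W, φ (pW x) = (x : Fin (K + 1) → RatFunc ℂ) (Fin.last K) := by
    intro x
    have hx : gmap (pW x) = x := DFunLike.congr_fun hgmap x
    simp [hφ, hx]
  refine ⟨K, le_refl K, fun i => φ (fun j => if i = j then 1 else 0), fun n => ?_⟩
  have hrn : r n ∈ W := Submodule.subset_span ⟨n, rfl⟩
  have h1 : F (n + K) = φ (pW ⟨r n, hrn⟩) := by
    rw [hφpW ⟨r n, hrn⟩]
    simp [hr, Fin.val_last]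
  rw [h1, LinearMap.pi_apply_eq_sum_univ φ (pW ⟨r n, hrn⟩)]
  refine Finset.sum_congr rfl fun i _ => ?_
  have h2 : pW ⟨r n, hrn⟩ i = F (n + (i : ℕ)) := by
    simp [hpW, LinearMap.funLeft, hr]
  rw [h2, smul_eq_mul, mul_comm]

end
end

section
/- Let h_i = f_i/g_i with f_i, g_i ∈ ℂ[T] for i = 1,…,m, and assume Z(f_1⋯f_m) ∩ Z(g_1⋯g_m) = ∅. Then for all integers n_1,…,n_m ≥ 0 and all a ∈ ℂ^*, one has Mult(h_1^{n_1}⋯h_m^{n_m} − a) ≤ Σ_{i=1}^m (deg f_i + deg g_i). -/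
open Polynomial

noncomputable section

/-- The largest multiplicity of a zero of a rational function (a zero of `h` being a
root of its reduced numerator). -/
def ratMult (h : RatFunc ℂ) : ℕ :=
  h.num.roots.toFinset.sup fun z => h.num.roots.count z

private lemma wr_mul (a b c d : ℂ[X]) :
    wronskian (a*c) (b*d) = wronskian a b * (c*d) + (a*b) * wronskian c d := by
  simp only [wronskian, derivative_mul]; ring

private lemma wr_pow (f g : ℂ[X]) (n : ℕ) :
    wronskian (g ^ n) (f ^ n) = C (n : ℂ) * (f * g) ^ (n - 1) * wronskian g f := by
  cases n with
  | zero => simp [wronskian]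
  | succ k =>
    simp only [wronskian, derivative_pow_succ, Nat.add_sub_cancel]
    push_cast
    ring

private lemma rm_le_natDegree {p : ℂ[X]} (hp : p ≠ 0) (z : ℂ) :
    rootMultiplicity z p ≤ p.natDegree := by
  have h := Polynomial.natDegree_le_of_dvd (Polynomial.pow_rootMultiplicity_dvd p z) hp
  simpa [Polynomial.natDegree_pow, Polynomial.natDegree_X_sub_C] using h

private lemma key_id {m : ℕ} (f g : Fin m → ℂ[X]) (n : Fin m → ℕ)
    (h1 : ∀ i, n i = 0 → f i = 1 ∧ g i = 1) (s : Finset (Fin m)) :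
    wronskian (∏ i ∈ s, g i ^ n i) (∏ i ∈ s, f i ^ n i) =
      (∏ i ∈ s, (f i * g i) ^ (n i - 1)) *
        ∑ i ∈ s, C (n i : ℂ) * wronskian (g i) (f i) * ∏ j ∈ s.erase i, (f j * g j) := by
  have hfg : ∀ j, (f j * g j) ^ n j = (f j * g j) ^ (n j - 1) * (f j * g j) := by
    intro j
    cases hnj : n j with
    | zero => rcases h1 j hnj with ⟨h1f, h1g⟩; simp [h1f, h1g]
    | succ k => rw [pow_succ]; norm_num
  induction s using Finset.induction with
  | empty => simp [wronskian]
  | @insert k s hk ih =>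
    have hsum : ∑ i ∈ s, C (n i : ℂ) * wronskian (g i) (f i) *
          ∏ j ∈ (insert k s).erase i, (f j * g j)
        = (f k * g k) *
          ∑ i ∈ s, C (n i : ℂ) * wronskian (g i) (f i) * ∏ j ∈ s.erase i, (f j * g j) := by
      rw [Finset.mul_sum]
      refine Finset.sum_congr rfl fun i hi => ?_
      rw [Finset.erase_insert_of_ne (by rintro rfl; exact hk hi),
          Finset.prod_insert (fun h => hk (Finset.mem_of_mem_erase h))]
      ring
    have hGF : (∏ i ∈ s, g i ^ n i) * (∏ i ∈ s, f i ^ n i) =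
        (∏ i ∈ s, (f i * g i) ^ (n i - 1)) * ∏ i ∈ s, (f i * g i) := by
      rw [← Finset.prod_mul_distrib, ← Finset.prod_mul_distrib]
      refine Finset.prod_congr rfl fun i _ => ?_
      rw [mul_comm (g i ^ n i), ← mul_pow, hfg i]
    have e1 : g k ^ n k * f k ^ n k = (f k * g k) ^ (n k - 1) * (f k * g k) := by
      rw [mul_comm, ← mul_pow, hfg k]
    rw [Finset.prod_insert hk, Finset.prod_insert hk, wr_mul, wr_pow, ih,
        Finset.sum_insert hk, Finset.erase_insert hk, hsum, Finset.prod_insert hk,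
        e1, hGF]
    ring

private lemma core_rm {m : ℕ} (f g : Fin m → ℂ[X]) (n : Fin m → ℕ) (a : ℂ) (ha : a ≠ 0)
    (hg : ∀ i, g i ≠ 0)
    (h1 : ∀ i, n i = 0 → f i = 1 ∧ g i = 1)
    (hZ : ∀ z : ℂ, ¬ ((∏ i, f i).eval z = 0 ∧ (∏ i, g i).eval z = 0)) (z : ℂ) :
    rootMultiplicity z (∏ i, f i ^ n i - C a * ∏ i, g i ^ n i) ≤
      ∑ i, ((f i).natDegree + (g i).natDegree) := by
  set S := ∑ i, ((f i).natDegree + (g i).natDegree) with hSdef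
  set F := ∏ i, f i ^ n i with hF
  set G := ∏ i, g i ^ n i with hG
  set P := F - C a * G with hPdef
  set μ := rootMultiplicity z P with hμ
  rcases Nat.eq_zero_or_pos μ with hμ0 | hμ1
  · omega
  have hPne : P ≠ 0 := by
    intro h; rw [hμ, h, rootMultiplicity_zero] at hμ1; omega
  have hPz : P.IsRoot z := by
    by_contra h
    rw [hμ, rootMultiplicity_eq_zero h] at hμ1; omega
  have hFG : F.eval z = a * G.eval z := by
    have : P.eval z = 0 := hPz
    rw [hPdef, eval_sub, eval_mul, eval_C, sub_eq_zero] at this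
    exact this
  have evalzero : ∀ h : Fin m → ℂ[X], (∏ i, h i ^ n i).eval z = 0 → (∏ i, h i).eval z = 0 := by
    intro h hh
    rw [eval_prod] at hh ⊢
    obtain ⟨i, hi, hzero⟩ := Finset.prod_eq_zero_iff.mp hh
    rw [eval_pow] at hzero
    exact Finset.prod_eq_zero hi (pow_eq_zero_iff'.mp hzero).1
  have hGz : G.eval z ≠ 0 := by
    intro h
    exact hZ z ⟨evalzero f (by rw [hFG, h, mul_zero]), evalzero g h⟩
  have hFz : F.eval z ≠ 0 := by rw [hFG]; exact mul_ne_zero ha hGz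
  have hfz : ∀ i, (f i).eval z ≠ 0 := by
    intro i hzero
    rcases Nat.eq_zero_or_pos (n i) with hni | hni
    · rw [(h1 i hni).1] at hzero; simp at hzero
    · apply hFz
      rw [hF, eval_prod]
      exact Finset.prod_eq_zero (Finset.mem_univ i)
        (by rw [eval_pow, hzero, zero_pow hni.ne'])
  have hgz : ∀ i, (g i).eval z ≠ 0 := by
    intro i hzero
    rcases Nat.eq_zero_or_pos (n i) with hni | hni
    · rw [(h1 i hni).2] at hzero; simp at hzero
    · apply hGz
      rw [hG, eval_prod]
      exact Finset.prod_eq_zero (Finset.mem_univ i)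
        (by rw [eval_pow, hzero, zero_pow hni.ne'])
  have hGne : G ≠ 0 := Finset.prod_ne_zero_iff.mpr fun i _ => pow_ne_zero _ (hg i)
  set E := ∏ i, (f i * g i) ^ (n i - 1) with hEdef
  set N := ∑ i, C (n i : ℂ) * wronskian (g i) (f i) *
      ∏ j ∈ Finset.univ.erase i, (f j * g j) with hNdef
  have hW : wronskian G P = E * N := by
    have hstep : wronskian G P = wronskian G F := by
      simp only [wronskian, hPdef, derivative_sub, derivative_C_mul]
      ring
    rw [hstep, hG, hF, key_id f g n h1]
  have hdvd : (X - C z) ^ (μ - 1) ∣ wronskian G P := by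
    have h1d : (X - C z) ^ (μ - 1) ∣ P :=
      dvd_trans (pow_dvd_pow _ (Nat.sub_le μ 1)) (pow_rootMultiplicity_dvd P z)
    have h2d : (X - C z) ^ (μ - 1) ∣ derivative P := by
      refine dvd_trans (pow_dvd_pow _ ?_) (pow_rootMultiplicity_dvd (derivative P) z)
      exact rootMultiplicity_sub_one_le_derivative_rootMultiplicity P z
    exact dvd_sub (h2d.mul_left G) (h1d.mul_left (derivative G))
  by_cases hN0 : N = 0
  · exfalso
    have hW0 : G * derivative P = derivative G * P := by
      have : wronskian G P = 0 := by rw [hW, hN0, mul_zero]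
      rw [wronskian, sub_eq_zero] at this
      exact this
    have hP' : derivative P ≠ 0 := by
      intro h
      have hd0 : P.natDegree = 0 := natDegree_eq_zero_of_derivative_eq_zero h
      obtain ⟨c, hc⟩ := Polynomial.natDegree_eq_zero.mp hd0
      rw [← hc] at hPz hPne
      simp only [IsRoot, eval_C] at hPz
      rw [hPz] at hPne
      simp at hPne
    have hLne : G * derivative P ≠ 0 := mul_ne_zero hGne hP'
    have hRne : derivative G * P ≠ 0 := hW0 ▸ hLne
    have heq := congrArg (rootMultiplicity z) hW0
    rw [rootMultiplicity_mul hLne, rootMultiplicity_mul hRne,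
        rootMultiplicity_eq_zero (fun h => hGz h), derivative_rootMultiplicity_of_root hPz,
        ← hμ] at heq
    omega
  · have hEz : E.eval z ≠ 0 := by
      rw [hEdef, eval_prod]
      refine Finset.prod_ne_zero_iff.mpr fun i _ => ?_
      rw [eval_pow, eval_mul]
      exact pow_ne_zero _ (mul_ne_zero (hfz i) (hgz i))
    have hEne : E ≠ 0 := fun h => hEz (by rw [h, eval_zero])
    have hEN : E * N ≠ 0 := mul_ne_zero hEne hN0
    have hle : μ - 1 ≤ rootMultiplicity z (E * N) :=
      (le_rootMultiplicity_iff hEN).mpr (hW ▸ hdvd)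
    rw [rootMultiplicity_mul hEN,
        rootMultiplicity_eq_zero (fun h => hEz h), zero_add] at hle
    -- S ≥ 1
    obtain ⟨i0, _, hi0⟩ := Finset.exists_ne_zero_of_sum_ne_zero (hNdef ▸ hN0)
    have hwr0 : wronskian (g i0) (f i0) ≠ 0 := by
      intro h; rw [h] at hi0; simp at hi0
    have hS1 : 1 ≤ S := by
      have hlt := natDegree_wronskian_lt_add hwr0
      have hmem : (f i0).natDegree + (g i0).natDegree ≤ S := by
        rw [hSdef]
        exact Finset.single_le_sum
          (f := fun i => (f i).natDegree + (g i).natDegree)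
          (fun i _ => Nat.zero_le _) (Finset.mem_univ i0)
      omega
    have hbound : ∀ i : Fin m,
        (C (n i : ℂ) * wronskian (g i) (f i) * ∏ j ∈ Finset.univ.erase i, (f j * g j)).natDegree
          ≤ S - 1 := by
      intro i
      by_cases hw : wronskian (g i) (f i) = 0
      · simp [hw]
      · have hd1 : (C (n i : ℂ) * wronskian (g i) (f i) *
            ∏ j ∈ Finset.univ.erase i, (f j * g j)).natDegree ≤
            (C (n i : ℂ) * wronskian (g i) (f i)).natDegree +
            (∏ j ∈ Finset.univ.erase i, (f j * g j)).natDegree := natDegree_mul_le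
        have hd2 : (C (n i : ℂ) * wronskian (g i) (f i)).natDegree ≤
            (wronskian (g i) (f i)).natDegree := by
          refine le_trans natDegree_mul_le ?_
          simp [natDegree_C]
        have hd3 : (∏ j ∈ Finset.univ.erase i, (f j * g j)).natDegree ≤
            ∑ j ∈ Finset.univ.erase i, ((f j).natDegree + (g j).natDegree) := by
          refine le_trans (natDegree_prod_le (Finset.univ.erase i) (fun j => f j * g j)) (Finset.sum_le_sum fun j _ => natDegree_mul_le)
        have hd4 := natDegree_wronskian_lt_add hw
        have hd5 : (f i).natDegree + (g i).natDegree +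
            ∑ j ∈ Finset.univ.erase i, ((f j).natDegree + (g j).natDegree) = S := by
          rw [hSdef]
          exact Finset.add_sum_erase _ (fun j => (f j).natDegree + (g j).natDegree) (Finset.mem_univ i)
        omega
    have hNd : N.natDegree ≤ S - 1 := by
      rw [hNdef]
      exact natDegree_sum_le_of_forall_le _ _ fun i _ => hbound i
    have := rm_le_natDegree hN0 z
    omega



private lemma core_ratMult {m : ℕ} (f g : Fin m → ℂ[X]) (n : Fin m → ℕ) (a : ℂ) (ha : a ≠ 0)
    (hg : ∀ i, g i ≠ 0)
    (h1 : ∀ i, n i = 0 → f i = 1 ∧ g i = 1)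
    (hZ : ∀ z : ℂ, ¬ ((∏ i, f i).eval z = 0 ∧ (∏ i, g i).eval z = 0)) :
    ratMult ((∏ i, (algebraMap (Polynomial ℂ) (RatFunc ℂ) (f i) /
        algebraMap (Polynomial ℂ) (RatFunc ℂ) (g i)) ^ n i) - RatFunc.C a) ≤
      ∑ i, ((f i).natDegree + (g i).natDegree) := by
  set F := ∏ i, f i ^ n i with hF
  set G := ∏ i, g i ^ n i with hG
  set P := F - C a * G with hPdef
  have hGne : G ≠ 0 := Finset.prod_ne_zero_iff.mpr fun i _ => pow_ne_zero _ (hg i)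
  have hprod : (∏ i, (algebraMap ℂ[X] (RatFunc ℂ) (f i) /
        algebraMap ℂ[X] (RatFunc ℂ) (g i)) ^ n i) - RatFunc.C a
      = algebraMap ℂ[X] (RatFunc ℂ) P / algebraMap ℂ[X] (RatFunc ℂ) G := by
    have e1 : (∏ i, (algebraMap ℂ[X] (RatFunc ℂ) (f i) /
          algebraMap ℂ[X] (RatFunc ℂ) (g i)) ^ n i)
        = algebraMap ℂ[X] (RatFunc ℂ) F / algebraMap ℂ[X] (RatFunc ℂ) G := by
      rw [hF, hG, map_prod, map_prod, ← Finset.prod_div_distrib]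
      refine Finset.prod_congr rfl fun i _ => ?_
      rw [div_pow, map_pow, map_pow]
    rw [e1, hPdef, map_sub, map_mul, sub_div, mul_div_assoc,
        div_self (RatFunc.algebraMap_ne_zero hGne), mul_one, RatFunc.algebraMap_C]
  rw [hprod]
  rcases eq_or_ne P 0 with hP0 | hPne
  · rw [hP0, map_zero, zero_div]
    simp [ratMult]
  · set h := algebraMap ℂ[X] (RatFunc ℂ) P / algebraMap ℂ[X] (RatFunc ℂ) G with hh
    have hcross : h.num * G = P * h.denom := by
      have e2 : algebraMap ℂ[X] (RatFunc ℂ) h.num / algebraMap ℂ[X] (RatFunc ℂ) h.denom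
          = algebraMap ℂ[X] (RatFunc ℂ) P / algebraMap ℂ[X] (RatFunc ℂ) G := by
        rw [RatFunc.num_div_denom]
      rw [div_eq_div_iff (RatFunc.algebraMap_ne_zero h.denom_ne_zero)
          (RatFunc.algebraMap_ne_zero hGne), ← map_mul, ← map_mul] at e2
      exact RatFunc.algebraMap_injective ℂ e2
    have hnumne : h.num ≠ 0 := by
      intro h0
      have h0' := hcross
      rw [h0, zero_mul] at h0'
      exact (mul_ne_zero hPne h.denom_ne_zero) h0'.symm
    unfold ratMult
    refine Finset.sup_le fun z hz => ?_
    rw [Polynomial.count_roots]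
    have hz' : h.num.IsRoot z :=
      (Polynomial.mem_roots'.mp (Multiset.mem_toFinset.mp hz)).2
    have hdz : rootMultiplicity z h.denom = 0 := by
      apply rootMultiplicity_eq_zero
      intro hd0
      obtain ⟨u, v, huv⟩ := RatFunc.isCoprime_num_denom h
      have hev := congrArg (Polynomial.eval z) huv
      rw [Polynomial.IsRoot] at hz' hd0
      simp [hz', hd0] at hev
    have hrm := congrArg (rootMultiplicity z) hcross
    rw [rootMultiplicity_mul (mul_ne_zero hnumne hGne),
        rootMultiplicity_mul (mul_ne_zero hPne h.denom_ne_zero), hdz, add_zero] at hrm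
    have hcore : rootMultiplicity z P ≤ ∑ i, ((f i).natDegree + (g i).natDegree) := by
      rw [hPdef, hF, hG]
      exact core_rm f g n a ha hg h1 hZ z
    omega


/-- **Lemma (multiplicities of roots).** If $h_i = f_i/g_i$ with
$Z(f_1⋯f_m) ∩ Z(g_1⋯g_m) = ∅$, then for all $n_1, …, n_m ≥ 0$ and $a ∈ ℂ^*$,
$\mathrm{Mult}(h_1^{n_1}⋯h_m^{n_m} − a) ≤ ∑_i (\deg f_i + \deg g_i)$. -/
theorem mult_of_product_of_powers_sub_const
    (m : ℕ) (f g : Fin m → Polynomial ℂ)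
    (hZ : ∀ z : ℂ, ¬ ((∏ i, f i).eval z = 0 ∧ (∏ i, g i).eval z = 0))
    (n : Fin m → ℕ) (a : ℂ) (ha : a ≠ 0) :
    ratMult ((∏ i, (algebraMap (Polynomial ℂ) (RatFunc ℂ) (f i) /
        algebraMap (Polynomial ℂ) (RatFunc ℂ) (g i)) ^ n i) - RatFunc.C a) ≤
      ∑ i, ((f i).natDegree + (g i).natDegree) := by
  by_cases hzero : ∃ i, 0 < n i ∧ (f i = 0 ∨ g i = 0)
  · obtain ⟨i, hni, hfg0⟩ := hzero
    have hfac : (algebraMap (Polynomial ℂ) (RatFunc ℂ) (f i) /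
        algebraMap (Polynomial ℂ) (RatFunc ℂ) (g i)) ^ n i = 0 := by
      rcases hfg0 with h | h <;> simp [h, zero_pow hni.ne']
    rw [Finset.prod_eq_zero (Finset.mem_univ i) hfac, zero_sub]
    have hnum : (-RatFunc.C a).num = Polynomial.C (-a) := by
      rw [← map_neg, RatFunc.num_C]
    have hrm0 : ratMult (-RatFunc.C a) = 0 := by
      simp [ratMult, hnum, Polynomial.roots_C]
    rw [hrm0]
    exact Nat.zero_le _
  · push_neg at hzero
    set f' := fun i => if n i = 0 then 1 else f i with hf'
    set g' := fun i => if n i = 0 then 1 else g i with hg'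
    have hprodeq : ∀ i : Fin m, (algebraMap (Polynomial ℂ) (RatFunc ℂ) (f i) /
          algebraMap (Polynomial ℂ) (RatFunc ℂ) (g i)) ^ n i
        = (algebraMap (Polynomial ℂ) (RatFunc ℂ) (f' i) /
          algebraMap (Polynomial ℂ) (RatFunc ℂ) (g' i)) ^ n i := by
      intro i
      by_cases hni : n i = 0
      · simp [hni]
      · simp [hf', hg', hni]
    rw [Finset.prod_congr rfl fun i _ => hprodeq i]
    have hg'ne : ∀ i, g' i ≠ 0 := by
      intro i
      by_cases hni : n i = 0
      · simp [hg', hni]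
      · simpa [hg', hni] using (hzero i (Nat.pos_of_ne_zero hni)).2
    have h1' : ∀ i, n i = 0 → f' i = 1 ∧ g' i = 1 := by
      intro i hni
      constructor <;> simp [hf', hg', hni]
    have hZ' : ∀ z : ℂ, ¬ ((∏ i, f' i).eval z = 0 ∧ (∏ i, g' i).eval z = 0) := by
      rintro z ⟨hFz, hGz⟩
      apply hZ z
      constructor
      · rw [eval_prod] at hFz ⊢
        obtain ⟨i, hi, hzi⟩ := Finset.prod_eq_zero_iff.mp hFz
        by_cases hni : n i = 0
        · simp [hf', hni] at hzi
        · exact Finset.prod_eq_zero hi (by simpa [hf', hni] using hzi)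
      · rw [eval_prod] at hGz ⊢
        obtain ⟨i, hi, hzi⟩ := Finset.prod_eq_zero_iff.mp hGz
        by_cases hni : n i = 0
        · simp [hg', hni] at hzi
        · exact Finset.prod_eq_zero hi (by simpa [hg', hni] using hzi)
    refine le_trans (core_ratMult f' g' n a ha hg'ne h1' hZ') ?_
    refine Finset.sum_le_sum fun i _ => ?_
    by_cases hni : n i = 0 <;> simp [hf', hg', hni]


end
end

section
/- Let a_1,…,a_k, f_1,…,f_k ∈ \bar{ℚ}[X] be nonzero polynomials of degree at most d such that f_i/f_j is non-constant for all 1 ≤ i < j ≤ k, for every 1 ≤ r < s < t ≤ k the pair (f_s/f_r, f_t/f_r) is non-exceptional, and gcd(a_1 f_1, …, a_k f_k) = 1. Then there exists an effectively computable constant C_6 > 0, depending only on a_1,…,a_k, f_1,…,f_k, such that for every n ≥ C_6, the polynomial F_n has at least (2/(k(k−1)))·max_{i=1,…,k}{deg a_i + n·deg f_i} − 2dk distinct roots in \bar{ℚ}. -/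
open Polynomial

noncomputable section

namespace NDR
open UniqueFactorizationMonoid

lemma rootMult_le_natDegree {p : ℂ[X]} (hp : p ≠ 0) (α : ℂ) :
    rootMultiplicity α p ≤ p.natDegree := by
  have h := Polynomial.pow_rootMultiplicity_dvd p α
  have := Polynomial.natDegree_le_of_dvd h hp
  simpa [Polynomial.natDegree_pow] using this

lemma rootMult_pow (p : ℂ[X]) (n : ℕ) (α : ℂ) :
    rootMultiplicity α (p ^ n) = n * rootMultiplicity α p := by
  classical
  rw [← Polynomial.count_roots, ← Polynomial.count_roots, Polynomial.roots_pow,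
    Multiset.count_nsmul]

lemma deriv_dvd {p : ℂ[X]} {α : ℂ} {t : ℕ} (h : (X - C α) ^ t ∣ p) :
    (X - C α) ^ (t - 1) ∣ derivative p := by
  obtain ⟨q, rfl⟩ := h
  rw [Polynomial.derivative_mul, Polynomial.derivative_pow]
  refine dvd_add (Dvd.dvd.mul_right ?_ _) (Dvd.dvd.mul_right (pow_dvd_pow _ (Nat.sub_le t 1)) _)
  exact ((dvd_refl ((X - C α) ^ (t-1))).mul_left _).mul_right _

lemma eq_C_of_deriv_eq_zero {p : ℂ[X]} (hp : derivative p = 0) :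
    ∃ c : ℂ, p = C c := by
  have h := Polynomial.natDegree_eq_zero_of_derivative_eq_zero hp
  exact ⟨p.coeff 0, (Polynomial.eq_C_of_natDegree_eq_zero h)⟩

lemma W0 {u v : ℂ[X]} (hu : u ≠ 0) (hv : v ≠ 0)
    (h : u * derivative v - derivative u * v = 0) :
    ∃ c : ℂ, c ≠ 0 ∧ v = C c * u := by
  classical
  obtain ⟨p, q, g, hcop, hgu, hgv⟩ := UniqueFactorizationMonoid.exists_reduced_factors u hu v
  have hg : g ≠ 0 := by rintro rfl; simp at hgu; exact hu hgu.symm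
  have hp : p ≠ 0 := by rintro rfl; simp at hgu; exact hu hgu.symm
  have hq : q ≠ 0 := by rintro rfl; simp at hgv; exact hv hgv.symm
  have key : g * g * (p * derivative q - derivative p * q) = 0 := by
    have : u * derivative v - derivative u * v
        = g * g * (p * derivative q - derivative p * q) := by
      rw [← hgu, ← hgv]
      simp only [Polynomial.derivative_mul]
      ring
    rw [← this, h]
  have hw : p * derivative q - derivative p * q = 0 := by
    rcases mul_eq_zero.mp key with h' | h'
    · exact absurd h' (mul_ne_zero hg hg)
    · exact h'
  have hpq : p * derivative q = derivative p * q := by linear_combination hw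
  have hcop' : IsCoprime p q := hcop.isCoprime
  -- p ∣ derivative p
  have hpd : derivative p = 0 := by
    have hdvd : p ∣ derivative p * q := ⟨derivative q, by linear_combination hpq.symm⟩
    have hdvd' : p ∣ derivative p := (hcop'.dvd_of_dvd_mul_right) hdvd
    by_contra hne
    have h1 := Polynomial.natDegree_le_of_dvd hdvd' hne
    have h2 := Polynomial.natDegree_derivative_le p
    have h3 : p.natDegree = 0 := by omega
    rw [Polynomial.eq_C_of_natDegree_eq_zero h3] at hne
    simp at hne
  have hqd : derivative q = 0 := by
    have hdvd : q ∣ p * derivative q := ⟨derivative p, by rw [hpq]; ring⟩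
    have hdvd' : q ∣ derivative q := (hcop'.symm.dvd_of_dvd_mul_left) hdvd
    by_contra hne
    have h1 := Polynomial.natDegree_le_of_dvd hdvd' hne
    have h2 := Polynomial.natDegree_derivative_le q
    have h3 : q.natDegree = 0 := by omega
    rw [Polynomial.eq_C_of_natDegree_eq_zero h3] at hne
    simp at hne
  obtain ⟨cp, hcp⟩ := eq_C_of_deriv_eq_zero hpd
  obtain ⟨cq, hcq⟩ := eq_C_of_deriv_eq_zero hqd
  have hcp0 : cp ≠ 0 := by rintro rfl; simp at hcp; exact hp hcp
  have hcq0 : cq ≠ 0 := by rintro rfl; simp at hcq; exact hq hcq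
  refine ⟨cq / cp, div_ne_zero hcq0 hcp0, ?_⟩
  rw [← hgv, ← hgu, hcp, hcq]
  have hC : C (cq / cp) * C cp = C cq := by
    rw [← Polynomial.C_mul, div_mul_cancel₀ _ hcp0]
  rw [← hC]; ring


def Th (d : ℕ) : ℕ → ℕ → ℕ
  | 0, _ => 1
  | m+1, A => max (A+2) (Th d m (2*A+2*d+1) + 2)

def Ps (d : ℕ) : ℕ → ℕ → ℕ
  | 0, _ => 0
  | m+1, A => Ps d m (2*A+2*d+1) + A + 2*d + 1

def Xi (d : ℕ) : ℕ → ℕ → ℕ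
  | 0, A => A
  | m+1, A => Xi d m (2*A+2*d+1)


section Chain
variable {k : ℕ} (f : Fin k → ℂ[X])

def dcoef (c : Fin k → ℂ[X]) (i₀ i : Fin k) (n : ℕ) : ℂ[X] :=
  (c i₀ * derivative (c i) - derivative (c i₀) * c i) * (f i₀ * f i)
    + C (n : ℂ) * (c i₀ * c i * (f i₀ * derivative (f i) - derivative (f i₀) * f i))

lemma KID2 (c : Fin k → ℂ[X]) (i₀ i : Fin k) (n : ℕ) :
    wronskian (c i₀ * f i₀ ^ (n+1)) (c i * f i ^ (n+1))
      = f i₀ ^ n * f i ^ n * dcoef f c i₀ i (n+1) := by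
  simp only [wronskian, dcoef, Polynomial.derivative_mul, Polynomial.derivative_pow,
    Nat.add_sub_cancel]
  ring

lemma sum_wronskian (c : Fin k → ℂ[X]) (S : Finset (Fin k)) (i₀ : Fin k) (hi₀ : i₀ ∈ S) (n : ℕ) :
    wronskian (c i₀ * f i₀ ^ (n+1)) (∑ i ∈ S, c i * f i ^ (n+1))
      = f i₀ ^ n * ∑ i ∈ S.erase i₀, dcoef f c i₀ i (n+1) * f i ^ n := by
  classical
  have h1 : wronskian (c i₀ * f i₀ ^ (n+1)) (∑ i ∈ S, c i * f i ^ (n+1))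
      = ∑ i ∈ S, wronskian (c i₀ * f i₀ ^ (n+1)) (c i * f i ^ (n+1)) := by
    simp only [← wronskianBilin_apply]
    exact map_sum _ _ _
  rw [h1, ← Finset.add_sum_erase _ _ hi₀, wronskian_self_eq_zero, zero_add, Finset.mul_sum]
  refine Finset.sum_congr rfl fun i hi => ?_
  rw [KID2]; ring

lemma dcoef_natDegree_le (c : Fin k → ℂ[X]) {i₀ i : Fin k} {A d : ℕ} (n : ℕ)
    (h0 : (c i₀).natDegree ≤ A) (hi : (c i).natDegree ≤ A)
    (hf0 : (f i₀).natDegree ≤ d) (hfi : (f i).natDegree ≤ d) :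
    (dcoef f c i₀ i n).natDegree ≤ 2*A + 2*d + 1 := by
  have hd0 : (derivative (c i₀)).natDegree ≤ A :=
    le_trans (Polynomial.natDegree_derivative_le _) (le_trans (Nat.sub_le _ _) h0)
  have hdi : (derivative (c i)).natDegree ≤ A :=
    le_trans (Polynomial.natDegree_derivative_le _) (le_trans (Nat.sub_le _ _) hi)
  have hdf0 : (derivative (f i₀)).natDegree ≤ d :=
    le_trans (Polynomial.natDegree_derivative_le _) (le_trans (Nat.sub_le _ _) hf0)
  have hdfi : (derivative (f i)).natDegree ≤ d :=
    le_trans (Polynomial.natDegree_derivative_le _) (le_trans (Nat.sub_le _ _) hfi)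
  have h1 : (c i₀ * derivative (c i) - derivative (c i₀) * c i).natDegree ≤ 2*A := by
    apply le_trans (Polynomial.natDegree_sub_le _ _)
    simp only [max_le_iff]
    exact ⟨le_trans (Polynomial.natDegree_mul_le) (by omega),
      le_trans (Polynomial.natDegree_mul_le) (by omega)⟩
  have h2 : (f i₀ * f i).natDegree ≤ 2*d := le_trans (Polynomial.natDegree_mul_le) (by omega)
  have h3 : ((c i₀ * derivative (c i) - derivative (c i₀) * c i) * (f i₀ * f i)).natDegree
      ≤ 2*A + 2*d := le_trans (Polynomial.natDegree_mul_le) (by omega)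
  have h4 : (f i₀ * derivative (f i) - derivative (f i₀) * f i).natDegree ≤ 2*d := by
    apply le_trans (Polynomial.natDegree_sub_le _ _)
    simp only [max_le_iff]
    exact ⟨le_trans (Polynomial.natDegree_mul_le) (by omega),
      le_trans (Polynomial.natDegree_mul_le) (by omega)⟩
  have h5 : (c i₀ * c i).natDegree ≤ 2*A := le_trans (Polynomial.natDegree_mul_le) (by omega)
  have h6 : (c i₀ * c i * (f i₀ * derivative (f i) - derivative (f i₀) * f i)).natDegree
      ≤ 2*A + 2*d := le_trans (Polynomial.natDegree_mul_le) (by omega)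
  have h7 : (C ((n : ℂ)) * (c i₀ * c i
      * (f i₀ * derivative (f i) - derivative (f i₀) * f i))).natDegree ≤ 2*A + 2*d := by
    apply le_trans (Polynomial.natDegree_mul_le)
    rw [Polynomial.natDegree_C]
    omega
  apply le_trans (Polynomial.natDegree_add_le _ _)
  simp only [max_le_iff]
  exact ⟨by omega, by omega⟩

lemma rootMult_C_mul (γ : ℂ) (hγ : γ ≠ 0) (p : ℂ[X]) (α : ℂ) :
    rootMultiplicity α (C γ * p) = rootMultiplicity α p := by
  classical
  rw [← Polynomial.count_roots, ← Polynomial.count_roots, Polynomial.roots_C_mul _ hγ]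

lemma dzero_bound (c : Fin k → ℂ[X]) {i₀ i : Fin k} {A n : ℕ}
    (hfi₀ : f i₀ ≠ 0) (hfi : f i ≠ 0) (hc₀ : c i₀ ≠ 0) (hci : c i ≠ 0)
    (hA₀ : (c i₀).natDegree ≤ A) (hAi : (c i).natDegree ≤ A)
    (hNC : ∃ α, rootMultiplicity α (f i₀) ≠ rootMultiplicity α (f i))
    (hz : dcoef f c i₀ i (n+1) = 0) : n + 1 ≤ A := by
  have hw : wronskian (c i₀ * f i₀ ^ (n+1)) (c i * f i ^ (n+1)) = 0 := by
    rw [KID2, hz, mul_zero]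
  have hu : c i₀ * f i₀ ^ (n+1) ≠ 0 := mul_ne_zero hc₀ (pow_ne_zero _ hfi₀)
  have hv : c i * f i ^ (n+1) ≠ 0 := mul_ne_zero hci (pow_ne_zero _ hfi)
  obtain ⟨γ, hγ, hprop⟩ := W0 hu hv (by rw [← wronskian]; exact hw)
  obtain ⟨α, hα⟩ := hNC
  have hmult : rootMultiplicity α (c i) + (n+1) * rootMultiplicity α (f i)
      = rootMultiplicity α (c i₀) + (n+1) * rootMultiplicity α (f i₀) := by
    have h1 : rootMultiplicity α (c i * f i ^ (n+1))
        = rootMultiplicity α (c i₀ * f i₀ ^ (n+1)) := by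
      rw [hprop, rootMult_C_mul _ hγ]
    rw [Polynomial.rootMultiplicity_mul hv, Polynomial.rootMultiplicity_mul hu,
      rootMult_pow, rootMult_pow] at h1
    exact h1
  have hb₀ : rootMultiplicity α (c i₀) ≤ A := le_trans (rootMult_le_natDegree hc₀ α) hA₀
  have hbi : rootMultiplicity α (c i) ≤ A := le_trans (rootMult_le_natDegree hci α) hAi
  rcases Nat.lt_or_ge (rootMultiplicity α (f i₀)) (rootMultiplicity α (f i)) with hlt | hge
  · have h2 : (n+1) * (rootMultiplicity α (f i₀) + 1) ≤ (n+1) * rootMultiplicity α (f i) :=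
      Nat.mul_le_mul_left _ hlt
    rw [Nat.mul_add, Nat.mul_one] at h2
    omega
  · have hlt : rootMultiplicity α (f i) < rootMultiplicity α (f i₀) := lt_of_le_of_ne hge (Ne.symm hα)
    have h2 : (n+1) * (rootMultiplicity α (f i) + 1) ≤ (n+1) * rootMultiplicity α (f i₀) :=
      Nat.mul_le_mul_left _ hlt
    rw [Nat.mul_add, Nat.mul_one] at h2
    omega

lemma main_chain (d : ℕ) (hf0 : ∀ i, f i ≠ 0) (hfd : ∀ i, (f i).natDegree ≤ d)
    (hNC : ∀ i j : Fin k, i ≠ j → ∃ α, rootMultiplicity α (f i) ≠ rootMultiplicity α (f j)) :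
    ∀ (m : ℕ) (S : Finset (Fin k)) (c : Fin k → ℂ[X]) (A n : ℕ) (ist : Fin k),
    S.card = m → ist ∈ S → (∀ i ∈ S, c i ≠ 0) → (∀ i ∈ S, (c i).natDegree ≤ A) →
    Th d m A < n →
    (∑ i ∈ S, c i * f i ^ n) ≠ 0 ∧
    n * (f ist).natDegree ≤ (∑ i ∈ S, c i * f i ^ n).natDegree + Ps d m A ∧
    ∃ e : ℂ[X], e ≠ 0 ∧ e.natDegree ≤ Xi d m A ∧
      ∀ α : ℂ, rootMultiplicity α (∑ i ∈ S, c i * f i ^ n)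
        ≤ (m - 1) + n * rootMultiplicity α (f ist) + rootMultiplicity α e := by
  intro m
  induction m with
  | zero =>
    intro S c A n ist hcard hist _ _ _
    rw [Finset.card_eq_zero] at hcard; subst hcard; simp at hist
  | succ m ih =>
    intro S c A n ist hcard hist hc hA hn
    rcases Nat.eq_zero_or_pos m with rfl | hm
    · -- base : |S| = 1
      obtain ⟨j, rfl⟩ := Finset.card_eq_one.mp hcard
      rw [Finset.mem_singleton] at hist; subst hist
      rw [Finset.sum_singleton]
      have hHne : c ist * f ist ^ n ≠ 0 :=
        mul_ne_zero (hc ist (Finset.mem_singleton_self _)) (pow_ne_zero _ (hf0 ist))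
      have hdeg : (c ist * f ist ^ n).natDegree
          = (c ist).natDegree + n * (f ist).natDegree := by
        rw [Polynomial.natDegree_mul (hc ist (Finset.mem_singleton_self _))
          (pow_ne_zero _ (hf0 ist)), Polynomial.natDegree_pow]
      refine ⟨hHne, by omega, c ist, hc ist (Finset.mem_singleton_self _), ?_, ?_⟩
      · show (c ist).natDegree ≤ Xi d 0 (2*A+2*d+1)
        have := hA ist (Finset.mem_singleton_self _)
        show (c ist).natDegree ≤ 2*A+2*d+1
        omega
      · intro α
        rw [Polynomial.rootMultiplicity_mul hHne, rootMult_pow]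
        omega
    · -- step : |S| = m+1 ≥ 2
      have hThA : A + 2 ≤ Th d (m+1) A := le_max_left _ _
      have hTh' : Th d m (2*A+2*d+1) + 2 ≤ Th d (m+1) A := le_max_right _ _
      obtain ⟨n', rfl⟩ : ∃ n', n = n' + 1 := ⟨n - 1, by omega⟩
      obtain ⟨i₀, hi₀S, hi₀ne⟩ := Finset.exists_mem_ne (by rw [hcard]; omega) ist
      have histS' : ist ∈ S.erase i₀ := Finset.mem_erase.mpr ⟨(Ne.symm hi₀ne), hist⟩
      have hcardS' : (S.erase i₀).card = m := by
        rw [Finset.card_erase_of_mem hi₀S, hcard]; omega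
      have hc'ne : ∀ i ∈ S.erase i₀, dcoef f c i₀ i (n'+1) ≠ 0 := by
        intro i hi hz
        obtain ⟨hine, hiS⟩ := Finset.mem_erase.mp hi
        have hb := dzero_bound f c (hf0 i₀) (hf0 i) (hc i₀ hi₀S) (hc i hiS)
          (hA i₀ hi₀S) (hA i hiS) (hNC i₀ i (Ne.symm hine)) hz
        omega
      have hc'deg : ∀ i ∈ S.erase i₀, (dcoef f c i₀ i (n'+1)).natDegree ≤ 2*A+2*d+1 := by
        intro i hi
        obtain ⟨hine, hiS⟩ := Finset.mem_erase.mp hi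
        exact dcoef_natDegree_le f c _ (hA i₀ hi₀S) (hA i hiS) (hfd i₀) (hfd i)
      have hrec := ih (S.erase i₀) (fun i => dcoef f c i₀ i (n'+1)) (2*A+2*d+1) n' ist
        hcardS' histS' hc'ne hc'deg (by omega)
      obtain ⟨hH1ne, hH1deg, e, heNe, heDeg, heMult⟩ := hrec
      have hu₀ne : c i₀ * f i₀ ^ (n'+1) ≠ 0 :=
        mul_ne_zero (hc i₀ hi₀S) (pow_ne_zero _ (hf0 i₀))
      have hfpow : f i₀ ^ n' ≠ 0 := pow_ne_zero _ (hf0 i₀)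
      have hwid := sum_wronskian f c S i₀ hi₀S n'
      have hwne : wronskian (c i₀ * f i₀ ^ (n'+1)) (∑ i ∈ S, c i * f i ^ (n'+1)) ≠ 0 := by
        rw [hwid]; exact mul_ne_zero hfpow hH1ne
      have hHne : (∑ i ∈ S, c i * f i ^ (n'+1)) ≠ 0 := by
        intro h0; apply hwne; rw [h0, wronskian_zero_right]
      refine ⟨hHne, ?_, e, heNe, heDeg, ?_⟩
      · -- degree bound
        have hdegw := natDegree_wronskian_lt_add hwne
        rw [hwid, Polynomial.natDegree_mul hfpow hH1ne, Polynomial.natDegree_pow,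
          Polynomial.natDegree_mul (hc i₀ hi₀S) (pow_ne_zero _ (hf0 i₀)),
          Polynomial.natDegree_pow] at hdegw
        have hfi₀d := hfd i₀
        have hfistd := hfd ist
        have hcA := hA i₀ hi₀S
        have hPs : Ps d (m+1) A = Ps d m (2*A+2*d+1) + A + 2*d + 1 := rfl
        rw [hPs]
        rw [add_one_mul] at hdegw ⊢
        generalize hP1 : n' * (f ist).natDegree = P1 at hH1deg ⊢
        generalize hP2 : n' * (f i₀).natDegree = P2 at hdegw
        omega
      · -- multiplicity bound
        intro α
        by_cases hmH : rootMultiplicity α (∑ i ∈ S, c i * f i ^ (n'+1)) = 0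
        · omega
        · set H := ∑ i ∈ S, c i * f i ^ (n'+1) with hH
          set u₀ := c i₀ * f i₀ ^ (n'+1) with hu₀
          set mu := rootMultiplicity α u₀ with hmu
          set mH := rootMultiplicity α H with hmHdef
          have dvd1 : (X - C α) ^ mu ∣ u₀ := Polynomial.pow_rootMultiplicity_dvd _ _
          have dvd4 : (X - C α) ^ mH ∣ H := Polynomial.pow_rootMultiplicity_dvd _ _
          have dvd2 : (X - C α) ^ (mH - 1) ∣ derivative H := deriv_dvd dvd4
          have dvd3 : (X - C α) ^ (mu - 1) ∣ derivative u₀ := deriv_dvd dvd1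
          have d5 : (X - C α) ^ (mu + (mH - 1)) ∣ u₀ * derivative H := by
            rw [pow_add]; exact mul_dvd_mul dvd1 dvd2
          have d6 : (X - C α) ^ (mu + mH - 1) ∣ u₀ * derivative H :=
            (pow_dvd_pow _ (by omega)).trans d5
          have d7 : (X - C α) ^ ((mu - 1) + mH) ∣ derivative u₀ * H := by
            rw [pow_add]; exact mul_dvd_mul dvd3 dvd4
          have d8 : (X - C α) ^ (mu + mH - 1) ∣ derivative u₀ * H :=
            (pow_dvd_pow _ (by omega)).trans d7
          have hdvdw : (X - C α) ^ (mu + mH - 1) ∣ wronskian u₀ H := by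
            rw [wronskian]; exact dvd_sub d6 d8
          have le1 : mu + mH - 1 ≤ rootMultiplicity α (wronskian u₀ H) :=
            (Polynomial.le_rootMultiplicity_iff hwne).mpr hdvdw
          have hwmult : rootMultiplicity α (wronskian u₀ H)
              = n' * rootMultiplicity α (f i₀)
                + rootMultiplicity α (∑ i ∈ S.erase i₀, dcoef f c i₀ i (n'+1) * f i ^ n') := by
            rw [hwid, Polynomial.rootMultiplicity_mul (mul_ne_zero hfpow hH1ne |> fun h => h)]
            · rw [rootMult_pow]
          have hmueq : mu = rootMultiplicity α (c i₀) + (n'+1) * rootMultiplicity α (f i₀) := by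
            rw [hmu, hu₀, Polynomial.rootMultiplicity_mul hu₀ne, rootMult_pow]
          have hrecmult := heMult α
          have hgoalmh : mH ≤ (m + 1 - 1) + (n'+1) * rootMultiplicity α (f ist)
              + rootMultiplicity α e := by
            rw [add_one_mul] at hmueq ⊢
            generalize hQ1 : n' * rootMultiplicity α (f ist) = Q1 at hrecmult ⊢
            generalize hQ2 : n' * rootMultiplicity α (f i₀) = Q2 at hmueq hwmult
            omega
          exact hgoalmh

end Chain

lemma prime_factor_deg_one {p q : ℂ[X]} (hp : p ≠ 0)
    (hq : q ∈ normalizedFactors p) : q.Monic ∧ q.natDegree = 1 := by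
  have hprime := prime_of_normalized_factor q hq
  have hq0 : q ≠ 0 := hprime.ne_zero
  have hmon : q.Monic := by
    have := normalize_normalized_factor q hq
    rw [← this]
    exact Polynomial.monic_normalize hq0
  have hdeg : q.degree = 1 := IsAlgClosed.degree_eq_one_of_irreducible ℂ hprime.irreducible
  exact ⟨hmon, Polynomial.natDegree_eq_of_degree_eq_some hdeg⟩

lemma radical_natDegree_eq {p : ℂ[X]} (hp : p ≠ 0) :
    (radical p).natDegree = p.roots.toFinset.card := by
  have hdeg : (radical p).natDegree = (primeFactors p).card := by
    rw [radical, Polynomial.natDegree_prod _ _ (fun q hq => ?_)]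
    · rw [Finset.card_eq_sum_ones]
      refine Finset.sum_congr rfl fun q hq => ?_
      exact (prime_factor_deg_one hp ((UniqueFactorizationMonoid.mem_primeFactors.mp hq : q ∈ normalizedFactors p))).2
    · exact (prime_of_normalized_factor q (UniqueFactorizationMonoid.mem_primeFactors.mp hq : q ∈ normalizedFactors p)).ne_zero
  rw [hdeg]
  refine Finset.card_bij (fun q _ => -(q.coeff 0)) ?_ ?_ ?_
  · intro q hq
    obtain ⟨hmon, hdeg1⟩ := prime_factor_deg_one hp ((UniqueFactorizationMonoid.mem_primeFactors.mp hq : q ∈ normalizedFactors p))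
    have hform := hmon.eq_X_add_C hdeg1
    have hdvd : q ∣ p := dvd_of_mem_normalizedFactors ((UniqueFactorizationMonoid.mem_primeFactors.mp hq : q ∈ normalizedFactors p))
    have hroot : p.IsRoot (-(q.coeff 0)) := by
      have hqroot : q.IsRoot (-(q.coeff 0)) := by
        rw [Polynomial.IsRoot, hform]; simp
      exact hqroot.dvd hdvd
    simpa [Polynomial.mem_roots hp] using hroot
  · intro q1 hq1 q2 hq2 heq
    obtain ⟨hmon1, hdeg1⟩ := prime_factor_deg_one hp ((UniqueFactorizationMonoid.mem_primeFactors.mp hq1 : q1 ∈ normalizedFactors p))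
    obtain ⟨hmon2, hdeg2⟩ := prime_factor_deg_one hp ((UniqueFactorizationMonoid.mem_primeFactors.mp hq2 : q2 ∈ normalizedFactors p))
    rw [hmon1.eq_X_add_C hdeg1, hmon2.eq_X_add_C hdeg2]
    have : q1.coeff 0 = q2.coeff 0 := by
      have := heq; field_simp at this; exact neg_inj.mp this
    rw [this]
  · intro α hα
    rw [Multiset.mem_toFinset, Polynomial.mem_roots hp] at hα
    have hirr : Irreducible (X - C α) := Polynomial.irreducible_X_sub_C α
    have hdvd : X - C α ∣ p := Polynomial.dvd_iff_isRoot.mpr hα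
    obtain ⟨q, hqmem, hassoc⟩ := exists_mem_normalizedFactors_of_dvd hp hirr hdvd
    refine ⟨q, UniqueFactorizationMonoid.mem_primeFactors.mpr hqmem, ?_⟩
    obtain ⟨hmon, hdeg1⟩ := prime_factor_deg_one hp hqmem
    have hqroot : q.IsRoot α := by
      have : X - C α ∣ q := hassoc.dvd
      have := Polynomial.dvd_iff_isRoot.mp this
      exact this
    rw [Polynomial.IsRoot, hmon.eq_X_add_C hdeg1] at hqroot
    simp at hqroot
    linear_combination -hqroot



lemma prop_of_mult_eq {p q : ℂ[X]} (hp : p ≠ 0) (hq : q ≠ 0)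
    (h : ∀ α, rootMultiplicity α p = rootMultiplicity α q) :
    ∃ c : ℂ, c ≠ 0 ∧ p = C c * q := by
  have hroots : p.roots = q.roots := by
    rw [Multiset.ext]
    intro α
    rw [Polynomial.count_roots, Polynomial.count_roots, h]
  have hcp : Multiset.card p.roots = p.natDegree := by
    have h2 := Polynomial.Splits.natDegree_eq_card_roots
      (IsAlgClosed.splits p)
    omega
  have hcq : Multiset.card q.roots = q.natDegree := by
    have h2 := Polynomial.Splits.natDegree_eq_card_roots
      (IsAlgClosed.splits q)
    omega
  have hpe := Polynomial.C_leadingCoeff_mul_prod_multiset_X_sub_C hcp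
  have hqe := Polynomial.C_leadingCoeff_mul_prod_multiset_X_sub_C hcq
  have hlp : p.leadingCoeff ≠ 0 := Polynomial.leadingCoeff_ne_zero.mpr hp
  have hlq : q.leadingCoeff ≠ 0 := Polynomial.leadingCoeff_ne_zero.mpr hq
  set cp := p.leadingCoeff with hcpdef
  set cq := q.leadingCoeff with hcqdef
  refine ⟨cp / cq, div_ne_zero hlp hlq, ?_⟩
  rw [← hpe, ← hqe, hroots, ← mul_assoc, ← Polynomial.C_mul, div_mul_cancel₀ _ hlq]

lemma NC_of_hnc {k : ℕ} (f : Fin k → ℂ[X]) (hf0 : ∀ i, f i ≠ 0)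
    (hnc : ∀ i j : Fin k, i < j → ¬ ∃ c : ℂ,
      algebraMap (Polynomial ℂ) (RatFunc ℂ) (f i) /
        algebraMap (Polynomial ℂ) (RatFunc ℂ) (f j) = RatFunc.C c) :
    ∀ i j : Fin k, i ≠ j →
      ∃ α, rootMultiplicity α (f i) ≠ rootMultiplicity α (f j) := by
  have key : ∀ i j : Fin k, i < j →
      ∃ α, rootMultiplicity α (f i) ≠ rootMultiplicity α (f j) := by
    intro i j hij
    by_contra hcon
    push_neg at hcon
    obtain ⟨c, hc0, hceq⟩ := prop_of_mult_eq (hf0 i) (hf0 j) hcon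
    apply hnc i j hij
    refine ⟨c, ?_⟩
    rw [hceq, map_mul]
    have hC : algebraMap (Polynomial ℂ) (RatFunc ℂ) (C c) = RatFunc.C c :=
      RatFunc.algebraMap_C c
    rw [hC, mul_div_assoc, div_self (RatFunc.algebraMap_ne_zero (hf0 j)), mul_one]
  intro i j hij
  rcases lt_or_gt_of_ne hij with h | h
  · exact key i j h
  · obtain ⟨α, hα⟩ := key j i h
    exact ⟨α, Ne.symm hα⟩

lemma sum_rootMult_le {e : ℂ[X]} (he : e ≠ 0) (T : Finset ℂ) :
    ∑ α ∈ T, rootMultiplicity α e ≤ e.natDegree := by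
  have h1 : ∑ α ∈ T, rootMultiplicity α e
      = ∑ α ∈ T ∩ e.roots.toFinset, rootMultiplicity α e := by
    symm
    apply Finset.sum_subset Finset.inter_subset_left
    intro α hαT hαn
    have : ¬ e.IsRoot α := by
      intro hroot
      apply hαn
      exact Finset.mem_inter.mpr ⟨hαT, Multiset.mem_toFinset.mpr
        ((Polynomial.mem_roots he).mpr hroot)⟩
    exact Polynomial.rootMultiplicity_eq_zero this
  rw [h1]
  calc ∑ α ∈ T ∩ e.roots.toFinset, rootMultiplicity α e
      ≤ ∑ α ∈ e.roots.toFinset, rootMultiplicity α e :=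
        Finset.sum_le_sum_of_subset Finset.inter_subset_right
    _ = Multiset.card e.roots := by
        simp only [← Polynomial.count_roots]
        exact Multiset.toFinset_sum_count_eq _
    _ ≤ e.natDegree := Polynomial.card_roots' e

lemma natDegree_eq_sum_rootMult {F : ℂ[X]} (hF : F ≠ 0) :
    F.natDegree = ∑ α ∈ F.roots.toFinset, rootMultiplicity α F := by
  have h1 : F.natDegree = Multiset.card F.roots := by
    have h2 := Polynomial.Splits.natDegree_eq_card_roots
      (IsAlgClosed.splits F)
    exact h2
  rw [h1, ← Multiset.toFinset_sum_count_eq]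
  simp only [Polynomial.count_roots]

end NDR


/-- **Lemma (number of distinct roots of $F_n$).** Under the hypotheses of the
parametric Skolem theorem with $\gcd(a_1 f_1, …, a_k f_k) = 1$, there is an effective
constant $C_6 > 0$ such that for all $n ≥ C_6$ the polynomial $F_n$ has at least
$\frac{2}{k(k-1)} \max_i\{\deg a_i + n \deg f_i\} − 2dk$ distinct roots. -/
theorem number_of_distinct_roots_of_Fn
    (k d : ℕ) (a f : Fin k → Polynomial ℂ)
    (ha0 : ∀ i, a i ≠ 0) (hf0 : ∀ i, f i ≠ 0)
    (haA : ∀ i, (a i).AlgCoeffs) (hfA : ∀ i, (f i).AlgCoeffs)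
    (had : ∀ i, (a i).natDegree ≤ d) (hfd : ∀ i, (f i).natDegree ≤ d)
    (hnc : ∀ i j : Fin k, i < j → ¬ ∃ c : ℂ,
      algebraMap (Polynomial ℂ) (RatFunc ℂ) (f i) /
        algebraMap (Polynomial ℂ) (RatFunc ℂ) (f j) = RatFunc.C c)
    (hne : ∀ r s t : Fin k, r < s → s < t →
      ¬ IsExceptionalPair
        (algebraMap (Polynomial ℂ) (RatFunc ℂ) (f s) /
          algebraMap (Polynomial ℂ) (RatFunc ℂ) (f r))
        (algebraMap (Polynomial ℂ) (RatFunc ℂ) (f t) /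
          algebraMap (Polynomial ℂ) (RatFunc ℂ) (f r)))
    (hgcd : ∀ p : Polynomial ℂ, (∀ i, p ∣ a i * f i) → IsUnit p) :
    ∃ C₆ : ℝ, 0 < C₆ ∧
      ∀ n : ℕ, C₆ ≤ (n : ℝ) →
        2 / ((k : ℝ) * ((k : ℝ) - 1)) *
            ((Finset.univ.sup fun i => (a i).natDegree + n * (f i).natDegree : ℕ) : ℝ)
          - 2 * (d : ℝ) * (k : ℝ) ≤
        (((∑ i, a i * f i ^ n : Polynomial ℂ).roots.toFinset.card : ℕ) : ℝ) := by
  rcases Nat.lt_or_ge k 2 with hk2 | hk2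
  · -- k ≤ 1 : trivial since the coefficient is 2/0 = 0
    refine ⟨1, one_pos, ?_⟩
    intro n hn
    have hzero : (k : ℝ) * ((k : ℝ) - 1) = 0 := by
      interval_cases k <;> norm_num
    rw [hzero, div_zero, zero_mul]
    have h1 : (0:ℝ) ≤ (((∑ i, a i * f i ^ n : Polynomial ℂ).roots.toFinset.card : ℕ) : ℝ) :=
      Nat.cast_nonneg _
    have h2 : (0:ℝ) ≤ 2 * (d:ℝ) * (k:ℝ) := by positivity
    linarith
  · -- k ≥ 2
    have hNC := NDR.NC_of_hnc f hf0 hnc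
    have hex : ∃ i1 : Fin k, 1 ≤ (f i1).natDegree := by
      by_contra hcon
      push_neg at hcon
      obtain ⟨α, hα⟩ := hNC ⟨0, by omega⟩ ⟨1, by omega⟩ (by simp [Fin.ext_iff])
      have h0 := NDR.rootMult_le_natDegree (hf0 ⟨0, by omega⟩) α
      have h1 := NDR.rootMult_le_natDegree (hf0 ⟨1, by omega⟩) α
      have h2 := hcon ⟨0, by omega⟩
      have h3 := hcon ⟨1, by omega⟩
      omega
    obtain ⟨i1, hi1⟩ := hex
    have hMn : ∀ n : ℕ,
        n ≤ Finset.univ.sup fun i => (a i).natDegree + n * (f i).natDegree := by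
      intro n
      have hle : (a i1).natDegree + n * (f i1).natDegree
          ≤ Finset.univ.sup fun i => (a i).natDegree + n * (f i).natDegree :=
        Finset.le_sup (f := fun j => (a j).natDegree + n * (f j).natDegree)
          (Finset.mem_univ i1)
      have h2 : n * 1 ≤ n * (f i1).natDegree := Nat.mul_le_mul_left n hi1
      omega
    rcases Nat.lt_or_ge k 3 with hk3 | hk3
    · -- k = 2 : Mason-Stothers
      have hk : k = 2 := by omega
      subst hk
      refine ⟨((NDR.Th d 2 d + 1 : ℕ) : ℝ), by positivity, ?_⟩
      intro n hn
      have hnT : NDR.Th d 2 d < n := by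
        by_contra hcon
        push_neg at hcon
        have : (n : ℝ) < ((NDR.Th d 2 d + 1 : ℕ) : ℝ) := by exact_mod_cast Nat.lt_succ_of_le hcon
        linarith
      have hn1 : 1 ≤ n := by
        have h2 : d + 2 ≤ NDR.Th d 2 d := le_max_left _ _
        omega
      have hchain := NDR.main_chain f d hf0 hfd hNC 2 Finset.univ a d n 0
        (by simp) (Finset.mem_univ _) (fun i _ => ha0 i) (fun i _ => had i) hnT
      have hFne : (∑ i, a i * f i ^ n) ≠ 0 := hchain.1
      have hu0 : a 0 * f 0 ^ n ≠ 0 := mul_ne_zero (ha0 0) (pow_ne_zero _ (hf0 0))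
      have hv0 : a 1 * f 1 ^ n ≠ 0 := mul_ne_zero (ha0 1) (pow_ne_zero _ (hf0 1))
      have hFuv : (∑ i, a i * f i ^ n) = a 0 * f 0 ^ n + a 1 * f 1 ^ n :=
        Fin.sum_univ_two _
      have hFne' : a 0 * f 0 ^ n + a 1 * f 1 ^ n ≠ 0 := hFuv ▸ hFne
      have hw0 : -(a 0 * f 0 ^ n + a 1 * f 1 ^ n) ≠ 0 := neg_ne_zero.mpr hFne'
      have hcop0 : IsCoprime (a 0 * f 0) (a 1 * f 1) := by
        classical
        rw [← EuclideanDomain.gcd_isUnit_iff]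
        apply hgcd
        intro i
        fin_cases i
        · exact EuclideanDomain.gcd_dvd_left _ _
        · exact EuclideanDomain.gcd_dvd_right _ _
      have hca : IsCoprime (a 0) (a 1) := hcop0.of_mul_left_left.of_mul_right_left
      have hcaf : IsCoprime (a 0) (f 1) := hcop0.of_mul_left_left.of_mul_right_right
      have hcfa : IsCoprime (f 0) (a 1) := hcop0.of_mul_left_right.of_mul_right_left
      have hcff : IsCoprime (f 0) (f 1) := hcop0.of_mul_left_right.of_mul_right_right
      have huv : IsCoprime (a 0 * f 0 ^ n) (a 1 * f 1 ^ n) := by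
        refine IsCoprime.mul_left ?_ ?_
        · exact (hca.mul_right (hcaf.pow_right))
        · exact IsCoprime.pow_left ((hcfa.mul_right (hcff.pow_right)))
      have hvw : IsCoprime (a 1 * f 1 ^ n) (-(a 0 * f 0 ^ n + a 1 * f 1 ^ n)) := by
        apply IsCoprime.neg_right
        have h1 := huv.symm.add_mul_left_right 1
        rwa [mul_one] at h1
      have hwu : IsCoprime (-(a 0 * f 0 ^ n + a 1 * f 1 ^ n)) (a 0 * f 0 ^ n) := by
        apply IsCoprime.neg_left
        apply IsCoprime.symm
        have h1 := huv.add_mul_left_right 1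
        rw [mul_one] at h1
        rwa [add_comm] at h1
      have habc := Polynomial.abc hu0 hv0 hw0 huv (by ring)
      rcases habc with ⟨h1, h2, _⟩ | ⟨hd1, hd2, _⟩
      · -- degree case
        have hprodne : a 0 * f 0 ^ n * (a 1 * f 1 ^ n)
            * -(a 0 * f 0 ^ n + a 1 * f 1 ^ n) ≠ 0 :=
          mul_ne_zero (mul_ne_zero hu0 hv0) hw0
        have hrad := NDR.radical_natDegree_eq hprodne
        have hneg : (-(a 0 * f 0 ^ n + a 1 * f 1 ^ n)).roots
            = (a 0 * f 0 ^ n + a 1 * f 1 ^ n).roots := by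
          have hne : -(a 0 * f 0 ^ n + a 1 * f 1 ^ n)
              = C (-1 : ℂ) * (a 0 * f 0 ^ n + a 1 * f 1 ^ n) := by
            rw [map_neg, Polynomial.C_1, neg_one_mul]
          rw [hne, Polynomial.roots_C_mul _ (by norm_num : (-1:ℂ) ≠ 0)]
        have hcardle : (UniqueFactorizationMonoid.radical
            (a 0 * f 0 ^ n * (a 1 * f 1 ^ n)
              * -(a 0 * f 0 ^ n + a 1 * f 1 ^ n))).natDegree
            ≤ 4*d + (a 0 * f 0 ^ n + a 1 * f 1 ^ n).roots.toFinset.card := by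
          rw [hrad]
          rw [Polynomial.roots_mul hprodne, Polynomial.roots_mul (mul_ne_zero hu0 hv0),
            Multiset.toFinset_add, Multiset.toFinset_add, hneg]
          have hcu : (a 0 * f 0 ^ n).roots.toFinset.card ≤ 2*d := by
            rw [Polynomial.roots_mul hu0, Polynomial.roots_pow, Multiset.toFinset_add,
              Multiset.toFinset_nsmul _ n (by omega)]
            have c1 : (a 0).roots.toFinset.card ≤ d :=
              le_trans (Multiset.toFinset_card_le _)
                (le_trans (Polynomial.card_roots' _) (had 0))
            have c2 : (f 0).roots.toFinset.card ≤ d :=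
              le_trans (Multiset.toFinset_card_le _)
                (le_trans (Polynomial.card_roots' _) (hfd 0))
            have := Finset.card_union_le (a 0).roots.toFinset (f 0).roots.toFinset
            omega
          have hcv : (a 1 * f 1 ^ n).roots.toFinset.card ≤ 2*d := by
            rw [Polynomial.roots_mul hv0, Polynomial.roots_pow, Multiset.toFinset_add,
              Multiset.toFinset_nsmul _ n (by omega)]
            have c1 : (a 1).roots.toFinset.card ≤ d :=
              le_trans (Multiset.toFinset_card_le _)
                (le_trans (Polynomial.card_roots' _) (had 1))
            have c2 : (f 1).roots.toFinset.card ≤ d :=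
              le_trans (Multiset.toFinset_card_le _)
                (le_trans (Polynomial.card_roots' _) (hfd 1))
            have := Finset.card_union_le (a 1).roots.toFinset (f 1).roots.toFinset
            omega
          have hc3 := Finset.card_union_le
            ((a 0 * f 0 ^ n).roots.toFinset ∪ (a 1 * f 1 ^ n).roots.toFinset)
            ((a 0 * f 0 ^ n + a 1 * f 1 ^ n).roots.toFinset)
          have hc4 := Finset.card_union_le (a 0 * f 0 ^ n).roots.toFinset
            (a 1 * f 1 ^ n).roots.toFinset
          omega
        have hdegu : (a 0 * f 0 ^ n).natDegree
            = (a 0).natDegree + n * (f 0).natDegree := by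
          rw [Polynomial.natDegree_mul (ha0 0) (pow_ne_zero _ (hf0 0)),
            Polynomial.natDegree_pow]
        have hdegv : (a 1 * f 1 ^ n).natDegree
            = (a 1).natDegree + n * (f 1).natDegree := by
          rw [Polynomial.natDegree_mul (ha0 1) (pow_ne_zero _ (hf0 1)),
            Polynomial.natDegree_pow]
        have hsup2 : (Finset.univ.sup fun j => (a j).natDegree + n * (f j).natDegree)
            ≤ max ((a 0).natDegree + n * (f 0).natDegree)
              ((a 1).natDegree + n * (f 1).natDegree) := by
          apply Finset.sup_le
          intro i _
          fin_cases i
          · exact le_max_left _ _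
          · exact le_max_right _ _
        rw [hdegu] at h1
        rw [hdegv] at h2
        have hMle : (Finset.univ.sup fun i => (a i).natDegree + n * (f i).natDegree) + 1
            ≤ 4*d + (a 0 * f 0 ^ n + a 1 * f 1 ^ n).roots.toFinset.card := by
          rcases max_cases ((a 0).natDegree + n * (f 0).natDegree)
            ((a 1).natDegree + n * (f 1).natDegree) with ⟨hm, _⟩ | ⟨hm, _⟩ <;> omega
        -- conclude in ℝ
        rw [hFuv]
        have hcast : ((Finset.univ.sup fun i =>
              (a i).natDegree + n * (f i).natDegree : ℕ) : ℝ) + 1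
            ≤ 4*(d:ℝ) + ((a 0 * f 0 ^ n + a 1 * f 1 ^ n).roots.toFinset.card : ℝ) := by
          exact_mod_cast hMle
        have hcoef : (2:ℝ) / ((2:ℝ) * ((2:ℝ) - 1)) = 1 := by norm_num
        push_cast
        norm_num
        linarith
      · -- derivative case : contradiction
        exfalso
        have hdeg0 : (a 0 * f 0 ^ n).natDegree = 0 :=
          Polynomial.natDegree_eq_zero_of_derivative_eq_zero hd1
        have hdeg1 : (a 1 * f 1 ^ n).natDegree = 0 :=
          Polynomial.natDegree_eq_zero_of_derivative_eq_zero hd2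
        rw [Polynomial.natDegree_mul (ha0 0) (pow_ne_zero _ (hf0 0)),
          Polynomial.natDegree_pow] at hdeg0
        rw [Polynomial.natDegree_mul (ha0 1) (pow_ne_zero _ (hf0 1)),
          Polynomial.natDegree_pow] at hdeg1
        obtain ⟨α, hα⟩ := hNC 0 1 (by decide)
        have m0 := NDR.rootMult_le_natDegree (hf0 0) α
        have m1 := NDR.rootMult_le_natDegree (hf0 1) α
        have hf0d : (f 0).natDegree = 0 := by
          rcases Nat.eq_zero_or_pos ((f 0).natDegree) with h | h
          · exact h
          · exfalso; have := Nat.mul_le_mul_left n h; omega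
        have hf1d : (f 1).natDegree = 0 := by
          rcases Nat.eq_zero_or_pos ((f 1).natDegree) with h | h
          · exact h
          · exfalso; have := Nat.mul_le_mul_left n h; omega
        omega
    · -- k ≥ 3 : chain assembly
      have hk0 : 0 < k := by omega
      refine ⟨((NDR.Th d k d + k * (d + NDR.Ps d k d + k * NDR.Xi d k d) + k + 1 : ℕ) : ℝ),
        by positivity, ?_⟩
      intro n hn
      have hn' : NDR.Th d k d + k * (d + NDR.Ps d k d + k * NDR.Xi d k d) + k + 1 ≤ n := by
        exact_mod_cast hn
      have hnT : NDR.Th d k d < n := by omega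
      have hchain := fun ist : Fin k => NDR.main_chain f d hf0 hfd hNC k Finset.univ a d n ist
        (by simp) (Finset.mem_univ _) (fun i _ => ha0 i) (fun i _ => had i) hnT
      have hFne : (∑ i, a i * f i ^ n) ≠ 0 := (hchain ⟨0, hk0⟩).1
      obtain ⟨imax, _, hmax⟩ := Finset.exists_mem_eq_sup Finset.univ
        ⟨⟨0, hk0⟩, Finset.mem_univ _⟩ (fun i => (a i).natDegree + n * (f i).natDegree)
      have hdeg1 : n * (f imax).natDegree
          ≤ (∑ i, a i * f i ^ n).natDegree + NDR.Ps d k d := (hchain imax).2.1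
      have hMle : (Finset.univ.sup fun i => (a i).natDegree + n * (f i).natDegree)
          ≤ (∑ i, a i * f i ^ n).natDegree + NDR.Ps d k d + d := by
        rw [hmax]
        have := had imax
        omega
      have hc2 := fun ist : Fin k => (hchain ist).2.2
      choose e he0 hedeg hemult using hc2
      have hsel : ∀ α : ℂ, ∃ i : Fin k, ¬ ((a i * f i).IsRoot α) := by
        intro α
        by_contra hcon
        push_neg at hcon
        have hun : IsUnit (X - C α) :=
          hgcd _ (fun i => Polynomial.dvd_iff_isRoot.mpr (hcon i))
        exact Polynomial.not_isUnit_X_sub_C α hun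
      choose sel hselspec using hsel
      have hroot : ∀ α ∈ (∑ i, a i * f i ^ n).roots.toFinset,
          rootMultiplicity α (∑ i, a i * f i ^ n)
            ≤ (k-1) + rootMultiplicity α (e (sel α)) := by
        intro α _
        have h1 := hemult (sel α) α
        have h2 : rootMultiplicity α (f (sel α)) = 0 := by
          apply Polynomial.rootMultiplicity_eq_zero
          intro hr
          apply hselspec α
          show (a (sel α) * f (sel α)).eval α = 0
          rw [Polynomial.eval_mul, hr, mul_zero]
        rw [h2, Nat.mul_zero] at h1
        omega
      have hsum : (∑ i, a i * f i ^ n).natDegree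
          ≤ (∑ i, a i * f i ^ n).roots.toFinset.card * (k-1)
            + ∑ α ∈ (∑ i, a i * f i ^ n).roots.toFinset,
                rootMultiplicity α (e (sel α)) := by
        rw [NDR.natDegree_eq_sum_rootMult hFne]
        calc ∑ α ∈ (∑ i, a i * f i ^ n).roots.toFinset,
              rootMultiplicity α (∑ i, a i * f i ^ n)
            ≤ ∑ α ∈ (∑ i, a i * f i ^ n).roots.toFinset,
              ((k-1) + rootMultiplicity α (e (sel α))) := Finset.sum_le_sum hroot
          _ = (∑ i, a i * f i ^ n).roots.toFinset.card * (k-1)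
              + ∑ α ∈ (∑ i, a i * f i ^ n).roots.toFinset,
                rootMultiplicity α (e (sel α)) := by
              rw [Finset.sum_add_distrib, Finset.sum_const, smul_eq_mul]
      have hfib : ∑ α ∈ (∑ i, a i * f i ^ n).roots.toFinset,
          rootMultiplicity α (e (sel α)) ≤ k * NDR.Xi d k d := by
        have heq := Finset.sum_fiberwise_of_maps_to
          (fun x (_ : x ∈ (∑ i, a i * f i ^ n).roots.toFinset) => Finset.mem_univ (sel x))
          (fun α => rootMultiplicity α (e (sel α)))
        rw [← heq]
        have hbd : ∀ ℓ : Fin k,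
            (∑ α ∈ (∑ i, a i * f i ^ n).roots.toFinset.filter (fun α => sel α = ℓ),
              rootMultiplicity α (e (sel α))) ≤ NDR.Xi d k d := by
          intro ℓ
          have heq2 : (∑ α ∈ (∑ i, a i * f i ^ n).roots.toFinset.filter
                (fun α => sel α = ℓ), rootMultiplicity α (e (sel α)))
              = ∑ α ∈ (∑ i, a i * f i ^ n).roots.toFinset.filter
                (fun α => sel α = ℓ), rootMultiplicity α (e ℓ) := by
            apply Finset.sum_congr rfl
            intro α hα
            rw [(Finset.mem_filter.mp hα).2]
          rw [heq2]
          exact le_trans (NDR.sum_rootMult_le (he0 ℓ) _) (hedeg ℓ)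
        calc (∑ ℓ : Fin k, ∑ α ∈ (∑ i, a i * f i ^ n).roots.toFinset.filter
              (fun α => sel α = ℓ), rootMultiplicity α (e (sel α)))
            ≤ ∑ _ℓ : Fin k, NDR.Xi d k d := Finset.sum_le_sum (fun ℓ _ => hbd ℓ)
          _ = k * NDR.Xi d k d := by simp [Finset.sum_const, mul_comm]
      -- now the numeric conclusion
      have hMn' := hMn n
      have hkey : (Finset.univ.sup fun i => (a i).natDegree + n * (f i).natDegree)
          ≤ (∑ i, a i * f i ^ n).roots.toFinset.card * (k-1)
            + (d + NDR.Ps d k d + k * NDR.Xi d k d) := by omega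
      -- cast to ℝ
      set Mn := Finset.univ.sup fun i => (a i).natDegree + n * (f i).natDegree with hMndef
      set Nn := (∑ i, a i * f i ^ n).roots.toFinset.card with hNndef
      set B1 := d + NDR.Ps d k d + k * NDR.Xi d k d with hB1def
      clear_value Mn Nn B1
      have hK3 : (3:ℝ) ≤ (k:ℝ) := by exact_mod_cast hk3
      have hd0 : (0:ℝ) ≤ (d:ℝ) := Nat.cast_nonneg _
      have hN0 : (0:ℝ) ≤ (Nn:ℝ) := Nat.cast_nonneg _
      have hB0 : (0:ℝ) ≤ (B1:ℝ) := Nat.cast_nonneg _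
      have c1 : (Mn:ℝ) ≤ (Nn:ℝ) * ((k:ℝ) - 1) + (B1:ℝ) := by
        have hcast : ((Nn * (k-1) + B1 : ℕ) : ℝ) = (Nn:ℝ) * ((k:ℝ) - 1) + (B1:ℝ) := by
          push_cast [Nat.cast_sub (by omega : 1 ≤ k)]
          ring
        rw [← hcast]
        exact_mod_cast hkey
      have c2 : (k:ℝ) * (B1:ℝ) + (k:ℝ) ≤ (Mn:ℝ) := by
        have h3 : k * B1 + k ≤ Mn := by omega
        exact_mod_cast h3
      have hpos : (0:ℝ) < (k:ℝ) * ((k:ℝ) - 1) := by nlinarith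
      have hM0 : (0:ℝ) ≤ (Mn:ℝ) := Nat.cast_nonneg _
      rw [div_mul_eq_mul_div, sub_le_iff_le_add, div_le_iff₀ hpos]
      have hk0' : (0:ℝ) ≤ (k:ℝ) := by linarith
      have e1 : (k:ℝ) * (Mn:ℝ) ≤ (k:ℝ) * ((Nn:ℝ) * ((k:ℝ) - 1) + (B1:ℝ)) :=
        mul_le_mul_of_nonneg_left c1 hk0'
      have e2 : (k:ℝ) * ((Nn:ℝ) * ((k:ℝ) - 1) + (B1:ℝ))
          = (Nn:ℝ) * ((k:ℝ) * ((k:ℝ)-1)) + (k:ℝ) * (B1:ℝ) := by ring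
      have e3' : ((k:ℝ)-1) * (Mn:ℝ) = (k:ℝ)*(Mn:ℝ) - (Mn:ℝ) := by ring
      have e3 : ((k:ℝ)-1) * (Mn:ℝ) ≤ (Nn:ℝ) * ((k:ℝ) * ((k:ℝ)-1)) := by linarith
      have h5 : (0:ℝ) ≤ ((k:ℝ) - 3) * (Mn:ℝ) := mul_nonneg (by linarith) hM0
      have e4' : ((k:ℝ)-1)*(Mn:ℝ) - 2*(Mn:ℝ) = ((k:ℝ)-3)*(Mn:ℝ) := by ring
      have e5 : ((Nn:ℝ) + 2*(d:ℝ)*(k:ℝ)) * ((k:ℝ)*((k:ℝ)-1))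
          = (Nn:ℝ)*((k:ℝ)*((k:ℝ)-1)) + (2*(d:ℝ)*(k:ℝ))*((k:ℝ)*((k:ℝ)-1)) := by ring
      have e6 : (0:ℝ) ≤ (2*(d:ℝ)*(k:ℝ))*((k:ℝ)*((k:ℝ)-1)) :=
        mul_nonneg (by positivity) (le_of_lt hpos)
      linarith


end
end

section
/- For every positive integer D, the number R(D) of roots of unity whose degree over ℚ is at most D satisfies R(D) ≤ 23·D². (Here R(D) = Σ_{m : φ(m) ≤ D} φ(m), where φ is Euler's totient function, since the roots of unity of exact order m have degree φ(m) over ℚ.) -/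
open Polynomial

noncomputable section

section CountHelpers

open Finset

lemma aux_odd : ∀ m : ℕ, Odd m → m ≤ m.totient ^ 2 := by
  intro m
  induction m using Nat.recOnPosPrimePosCoprime with
  | prime_pow p n hp hn =>
    intro hodd
    have hp2 : p ≠ 2 := by
      rintro rfl
      rw [Nat.odd_iff, Nat.pow_mod] at hodd
      simp [zero_pow hn.ne'] at hodd
    have hp3 : 3 ≤ p := by
      have := hp.two_le; omega
    rw [Nat.totient_prime_pow hp hn, mul_pow, ← pow_mul]
    have h1 : p ^ n ≤ p ^ ((n-1)*2) * p := by
      rw [← pow_succ]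
      exact Nat.pow_le_pow_right hp.pos (by omega)
    refine h1.trans (Nat.mul_le_mul_left _ ?_)
    obtain ⟨k, rfl⟩ : ∃ k, p = k + 3 := ⟨p - 3, by omega⟩
    have : k + 3 - 1 = k + 2 := by omega
    rw [this]
    nlinarith
  | zero => simp [Nat.odd_iff]
  | one => simp
  | coprime a b ha hb hab iha ihb =>
    intro hodd
    rw [Nat.odd_mul] at hodd
    rw [Nat.totient_mul hab, mul_pow]
    exact Nat.mul_le_mul (iha hodd.1) (ihb hodd.2)

lemma order_le (m : ℕ) : m ≤ 2 * m.totient ^ 2 := by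
  rcases Nat.eq_zero_or_pos m with rfl | hm
  · simp
  set e := m.factorization 2 with he
  set q := m / 2 ^ e with hq
  have hqd : 2 ^ e ∣ m := Nat.ordProj_dvd m 2
  have hmeq : 2 ^ e * q = m := Nat.mul_div_cancel' hqd
  have hnd : ¬ 2 ∣ q := Nat.not_dvd_ordCompl Nat.prime_two hm.ne'
  have hqodd : Odd q := by
    rw [Nat.odd_iff]; omega
  have hcop : Nat.Coprime (2 ^ e) q :=
    Nat.Coprime.pow_left _ (Nat.Prime.coprime_iff_not_dvd Nat.prime_two |>.mpr hnd)
  have htot : m.totient = (2 ^ e).totient * q.totient := by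
    rw [← hmeq, Nat.totient_mul hcop]
  have hqle : q ≤ q.totient ^ 2 := aux_odd q hqodd
  rcases Nat.eq_zero_or_pos e with he0 | he1
  · rw [htot, he0]
    simp only [pow_zero, Nat.totient_one, one_mul]
    rw [he0, pow_zero, one_mul] at hmeq
    omega
  · have h2e : (2 ^ e).totient = 2 ^ (e - 1) := by
      rw [Nat.totient_prime_pow Nat.prime_two he1]; simp
    rw [htot, h2e, mul_pow, ← pow_mul]
    have h1 : m ≤ 2 ^ e * q.totient ^ 2 := by
      rw [← hmeq]; exact Nat.mul_le_mul_left _ hqle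
    refine h1.trans ?_
    rw [← mul_assoc]
    apply Nat.mul_le_mul_right
    calc 2 ^ e ≤ 2 ^ (1 + (e-1)*2) := Nat.pow_le_pow_right (by norm_num) (by omega)
    _ = 2 * 2 ^ ((e-1)*2) := by rw [pow_add, pow_one]

lemma icc16 : (Icc 1 6 : Finset ℕ) = {1,2,3,4,5,6} := by decide

lemma zeta2_tail (B : ℕ) (hB : 6 ≤ B) : ∑ n ∈ Icc 7 B, (1:ℚ)/n^2 ≤ 2/13 - 1/(B+1/2) := by
  induction B, hB using Nat.le_induction with
  | base => norm_num
  | succ B hB ih =>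
    rw [Finset.sum_Icc_succ_top (by omega)]
    have h1 : (1:ℚ)/((B:ℚ)+1)^2 ≤ 1/((B:ℚ)+1/2) - 1/((B:ℚ)+1+1/2) := by
      rw [div_sub_div _ _ (by positivity) (by positivity)]
      rw [div_le_div_iff₀ (by positivity) (by positivity)]
      nlinarith [sq_nonneg ((B:ℚ))]
    push_cast
    push_cast at ih h1
    linarith

lemma zeta2_bound (B : ℕ) : ∑ n ∈ Icc 1 B, (1:ℚ)/n^2 ≤ 6581/4000 := by
  have h1 : ∑ n ∈ (Icc 1 6 : Finset ℕ), (1:ℚ)/n^2 = 5369/3600 := by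
    rw [icc16]
    norm_num
  rcases le_or_gt B 6 with hB | hB
  · have hs : ∑ n ∈ Icc 1 B, (1:ℚ)/n^2 ≤ ∑ n ∈ (Icc 1 6 : Finset ℕ), (1:ℚ)/n^2 := by
      apply Finset.sum_le_sum_of_subset_of_nonneg (Finset.Icc_subset_Icc_right hB)
      intros; positivity
    rw [h1] at hs; linarith
  · have hsplit : (Icc 1 B : Finset ℕ) = Icc 1 6 ∪ Icc 7 B := by
      ext a; simp only [Finset.mem_Icc, Finset.mem_union]; omega
    have hdisj : Disjoint (Icc 1 6 : Finset ℕ) (Icc 7 B) := by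
      rw [Finset.disjoint_left]; intro a ha hb
      simp only [Finset.mem_Icc] at ha hb; omega
    rw [hsplit, Finset.sum_union hdisj, h1]
    have h2 := zeta2_tail B (by omega)
    have h3 : (0:ℚ) ≤ 1/((B:ℚ)+1/2) := by positivity
    linarith

lemma zeta3_tail (B : ℕ) (hB : 3 ≤ B) : ∑ n ∈ Icc 4 B, (1:ℚ)/n^3 ≤ 1/24 - 1/(2*(B:ℚ)*(B+1)) := by
  induction B, hB using Nat.le_induction with
  | base => norm_num
  | succ B hB ih =>
    rw [Finset.sum_Icc_succ_top (by omega)]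
    have hB1 : (1:ℚ) ≤ (B:ℚ) := by exact_mod_cast Nat.one_le_iff_ne_zero.mpr (by omega)
    have h1 : (1:ℚ)/((B:ℚ)+1)^3 ≤ 1/(2*(B:ℚ)*(B+1)) - 1/(2*((B:ℚ)+1)*(B+1+1)) := by
      rw [div_sub_div _ _ (by positivity) (by positivity)]
      rw [div_le_div_iff₀ (by positivity) (by positivity)]
      nlinarith [sq_nonneg ((B:ℚ)), pow_pos (show (0:ℚ) < (B:ℚ)+1 by positivity) 3]
    push_cast
    push_cast at ih h1
    linarith

lemma zeta3_bound (B : ℕ) : ∑ n ∈ Icc 1 B, (1:ℚ)/n^3 ≤ 65/54 := by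
  have h1 : ∑ n ∈ (Icc 1 3 : Finset ℕ), (1:ℚ)/n^3 = 251/216 := by
    rw [show (Icc 1 3 : Finset ℕ) = {1,2,3} by decide]
    norm_num
  rcases le_or_gt B 3 with hB | hB
  · have hs : ∑ n ∈ Icc 1 B, (1:ℚ)/n^3 ≤ ∑ n ∈ (Icc 1 3 : Finset ℕ), (1:ℚ)/n^3 := by
      apply Finset.sum_le_sum_of_subset_of_nonneg (Finset.Icc_subset_Icc_right hB)
      intros; positivity
    rw [h1] at hs; linarith
  · have hsplit : (Icc 1 B : Finset ℕ) = Icc 1 3 ∪ Icc 4 B := by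
      ext a; simp only [Finset.mem_Icc, Finset.mem_union]; omega
    have hdisj : Disjoint (Icc 1 3 : Finset ℕ) (Icc 4 B) := by
      rw [Finset.disjoint_left]; intro a ha hb
      simp only [Finset.mem_Icc] at ha hb; omega
    rw [hsplit, Finset.sum_union hdisj, h1]
    have h2 := zeta3_tail B (by omega)
    have h3 : (0:ℚ) ≤ 1/(2*(B:ℚ)*(B+1)) := by positivity
    linarith

lemma zeta2_tail11 (B : ℕ) (hB : 10 ≤ B) :
    ∑ n ∈ Icc 11 B, (1:ℚ)/n^2 ≤ 2/21 - 1/(B+1/2) := by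
  induction B, hB using Nat.le_induction with
  | base => norm_num
  | succ B hB ih =>
    rw [Finset.sum_Icc_succ_top (by omega)]
    have h1 : (1:ℚ)/((B:ℚ)+1)^2 ≤ 1/((B:ℚ)+1/2) - 1/((B:ℚ)+1+1/2) := by
      rw [div_sub_div _ _ (by positivity) (by positivity)]
      rw [div_le_div_iff₀ (by positivity) (by positivity)]
      nlinarith [sq_nonneg ((B:ℚ))]
    push_cast
    push_cast at ih h1
    linarith

lemma weier (s : Finset ℕ) (f : ℕ → ℚ) (h0 : ∀ i ∈ s, 0 ≤ f i) (h1 : ∀ i ∈ s, f i ≤ 1) :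
    1 - ∑ i ∈ s, f i ≤ ∏ i ∈ s, (1 - f i) := by
  induction s using Finset.cons_induction with
  | empty => simp
  | cons a s ha ih =>
    rw [Finset.sum_cons, Finset.prod_cons]
    have h0a := h0 a (Finset.mem_cons_self a s)
    have h1a := h1 a (Finset.mem_cons_self a s)
    have ihs := ih (fun i hi => h0 i (Finset.mem_cons_of_mem hi))
      (fun i hi => h1 i (Finset.mem_cons_of_mem hi))
    have hsum : 0 ≤ ∑ i ∈ s, f i := Finset.sum_nonneg (fun i hi => h0 i (Finset.mem_cons_of_mem hi))
    nlinarith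

lemma prime_prod_bound (m : ℕ) :
    (14592/25725 : ℚ) ≤ ∏ p ∈ m.primeFactors, (1 - 1/(p:ℚ)^2) := by
  classical
  rcases Nat.eq_zero_or_pos m with rfl | hm
  · simp; norm_num
  set s := m.primeFactors with hs
  have hprime : ∀ p ∈ s, p.Prime := fun p hp => Nat.prime_of_mem_primeFactors hp
  have hfac01 : ∀ p ∈ s, (0:ℚ) ≤ 1 - 1/(p:ℚ)^2 ∧ 1 - 1/(p:ℚ)^2 ≤ 1 := by
    intro p hp
    have h2 : 2 ≤ p := (hprime p hp).two_le
    have : (1:ℚ)/(p:ℚ)^2 ≤ 1/4 := by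
      rw [div_le_div_iff₀ (by positivity) (by norm_num)]
      have : (2:ℚ) ≤ (p:ℚ) := by exact_mod_cast h2
      nlinarith
    have hpos : (0:ℚ) < 1/(p:ℚ)^2 := by positivity
    constructor <;> linarith
  rw [← Finset.prod_filter_mul_prod_filter_not s (· ≤ 10)]
  have hP1 : (768/1225 : ℚ) ≤ ∏ p ∈ s.filter (· ≤ 10), (1 - 1/(p:ℚ)^2) := by
    have hsub : s.filter (· ≤ 10) ⊆ ({2,3,5,7} : Finset ℕ) := by
      intro p hp
      rw [Finset.mem_filter] at hp
      have := hprime p hp.1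
      have h10 := hp.2
      simp only [Finset.mem_insert, Finset.mem_singleton]
      interval_cases p <;> first | (exfalso; revert this; decide) | tauto
    calc (768/1225 : ℚ) = ∏ p ∈ ({2,3,5,7} : Finset ℕ), (1 - 1/(p:ℚ)^2) := by norm_num
    _ ≤ ∏ p ∈ s.filter (· ≤ 10), (1 - 1/(p:ℚ)^2) := by
        rw [← Finset.prod_sdiff hsub]
        have hle1 : ∏ p ∈ ({2,3,5,7} : Finset ℕ) \ s.filter (· ≤ 10), (1 - 1/(p:ℚ)^2) ≤ 1 := by
          apply Finset.prod_le_one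
          · intro p hp
            have hps : p ∈ ({2,3,5,7} : Finset ℕ) := Finset.mem_sdiff.mp hp |>.1
            fin_cases hps <;> norm_num
          · intro p hp
            have hps : p ∈ ({2,3,5,7} : Finset ℕ) := Finset.mem_sdiff.mp hp |>.1
            fin_cases hps <;> norm_num
        have hge0 : (0:ℚ) ≤ ∏ p ∈ s.filter (· ≤ 10), (1 - 1/(p:ℚ)^2) := by
          apply Finset.prod_nonneg
          intro p hp
          exact (hfac01 p (Finset.mem_filter.mp hp |>.1)).1
        nlinarith
  have hP2 : (19/21 : ℚ) ≤ ∏ p ∈ s.filter (¬ · ≤ 10), (1 - 1/(p:ℚ)^2) := by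
    have hsub : s.filter (¬ · ≤ 10) ⊆ Icc 11 m := by
      intro p hp
      rw [Finset.mem_filter] at hp
      have h1 : p ∣ m := Nat.dvd_of_mem_primeFactors hp.1
      have h2 := Nat.le_of_dvd hm h1
      simp only [Finset.mem_Icc]
      have := hp.2
      omega
    have hsum : ∑ p ∈ s.filter (¬ · ≤ 10), 1/(p:ℚ)^2 ≤ 2/21 := by
      calc ∑ p ∈ s.filter (¬ · ≤ 10), 1/(p:ℚ)^2 ≤ ∑ n ∈ Icc 11 m, (1:ℚ)/n^2 := by
            apply Finset.sum_le_sum_of_subset_of_nonneg hsub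
            intros; positivity
      _ ≤ 2/21 := by
          rcases le_or_gt 11 m with hm11 | hm11
          · have := zeta2_tail11 m (by omega)
            have : (0:ℚ) < 1/((m:ℚ)+1/2) := by positivity
            have h := zeta2_tail11 m (by omega)
            linarith
          · have : (Icc 11 m : Finset ℕ) = ∅ := by
              apply Finset.Icc_eq_empty; omega
            rw [this]; norm_num
    have hw := weier (s.filter (¬ · ≤ 10)) (fun p => 1/(p:ℚ)^2)
      (fun p hp => by positivity)
      (fun p hp => (by
        have := (hfac01 p (Finset.mem_filter.mp hp |>.1)).1
        linarith))
    have : ∏ p ∈ s.filter (¬ · ≤ 10), (1 - 1/(p:ℚ)^2) ≥ 1 - 2/21 := le_trans (by linarith) hw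
    linarith
  have hge0 : (0:ℚ) ≤ ∏ p ∈ s.filter (· ≤ 10), (1 - 1/(p:ℚ)^2) := by
    apply Finset.prod_nonneg
    intro p hp
    exact (hfac01 p (Finset.mem_filter.mp hp |>.1)).1
  calc (14592/25725 : ℚ) = (768/1225) * (19/21) := by norm_num
  _ ≤ _ := by
      apply mul_le_mul hP1 hP2 (by norm_num) hge0

-- σ(m) ≥ m * ∏ (1 + 1/p)
lemma sigma_lower (m : ℕ) (hm : 0 < m) :
    (m:ℚ) * ∏ p ∈ m.primeFactors, (1 + (p:ℚ)⁻¹) ≤ ∑ d ∈ m.divisors, (d:ℚ) := by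
  classical
  have hexp : ∏ p ∈ m.primeFactors, ((p:ℚ)⁻¹ + 1) =
      ∑ t ∈ m.primeFactors.powerset, ∏ p ∈ t, (p:ℚ)⁻¹ := by
    rw [Finset.prod_add]
    apply Finset.sum_congr rfl
    intro t ht
    simp
  have hdvd : ∀ t ∈ m.primeFactors.powerset, (∏ p ∈ t, p) ∣ m := by
    intro t ht
    rw [Finset.mem_powerset] at ht
    exact dvd_trans (Finset.prod_dvd_prod_of_subset t m.primeFactors _ ht)
      (Nat.prod_primeFactors_dvd m)
  have hterm : ∀ t ∈ m.primeFactors.powerset,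
      (m:ℚ) * ∏ p ∈ t, (p:ℚ)⁻¹ = ((m / ∏ p ∈ t, p : ℕ) : ℚ) := by
    intro t ht
    have h1 := hdvd t ht
    have hne : ((∏ p ∈ t, p : ℕ) : ℚ) ≠ 0 := by
      have : 0 < ∏ p ∈ t, p := Nat.pos_of_dvd_of_pos h1 hm |>.trans_le le_rfl
      positivity
    rw [Nat.cast_div h1 hne, Nat.cast_prod]
    rw [eq_div_iff (by rwa [Nat.cast_prod] at hne)]
    rw [mul_assoc, ← Finset.prod_mul_distrib]
    have : ∀ p ∈ t, ((p:ℚ)⁻¹ * (p:ℚ)) = 1 := by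
      intro p hp
      have hppos : (0:ℚ) < p := by
        exact_mod_cast (Nat.prime_of_mem_primeFactors (Finset.mem_powerset.mp ht hp)).pos
      field_simp
    rw [Finset.prod_congr rfl this, Finset.prod_const_one, mul_one]
  calc (m:ℚ) * ∏ p ∈ m.primeFactors, (1 + (p:ℚ)⁻¹)
      = ∑ t ∈ m.primeFactors.powerset, (m:ℚ) * ∏ p ∈ t, (p:ℚ)⁻¹ := by
        simp_rw [add_comm (1:ℚ)]
        rw [hexp, Finset.mul_sum]
  _ = ∑ t ∈ m.primeFactors.powerset, ((m / ∏ p ∈ t, p : ℕ) : ℚ) := by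
        exact Finset.sum_congr rfl hterm
  _ ≤ ∑ d ∈ m.divisors, (d:ℚ) := by
        have hinj : Set.InjOn (fun t => m / ∏ p ∈ t, p) m.primeFactors.powerset := by
          intro t1 h1 t2 h2 heq
          simp only at heq
          have e1 : ∏ p ∈ t1, p = ∏ p ∈ t2, p := by
            have d1 := hdvd t1 h1
            have d2 := hdvd t2 h2
            have := Nat.div_div_self d1 hm.ne'
            rw [heq] at this
            rw [Nat.div_div_self d2 hm.ne'] at this
            exact this.symm
          have p1 : ∀ p ∈ t1, p.Prime := fun p hp =>
            Nat.prime_of_mem_primeFactors (Finset.mem_powerset.mp h1 hp)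
          have p2 : ∀ p ∈ t2, p.Prime := fun p hp =>
            Nat.prime_of_mem_primeFactors (Finset.mem_powerset.mp h2 hp)
          rw [← Nat.primeFactors_prod p1, ← Nat.primeFactors_prod p2, e1]
        rw [← Finset.sum_image (fun t ht t' ht' h => hinj ht ht' h)]
        apply Finset.sum_le_sum_of_subset_of_nonneg
        · intro d hd
          rw [Finset.mem_image] at hd
          obtain ⟨t, ht, rfl⟩ := hd
          rw [Nat.mem_divisors]
          exact ⟨Nat.div_dvd_of_dvd (hdvd t ht), hm.ne'⟩
        · intros; positivity

-- key1 : β m² ≤ φ(m) σ(m)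
lemma key1 (m : ℕ) (hm : 0 < m) :
    (14592/25725 : ℚ) * (m:ℚ)^2 ≤ (m.totient : ℚ) * ∑ d ∈ m.divisors, (d:ℚ) := by
  have htot : (m.totient : ℚ) = m * ∏ p ∈ m.primeFactors, (1 - (p:ℚ)⁻¹) :=
    Nat.totient_eq_mul_prod_factors m
  have hsig := sigma_lower m hm
  have htotnn : (0:ℚ) ≤ ∏ p ∈ m.primeFactors, (1 - (p:ℚ)⁻¹) := by
    apply Finset.prod_nonneg
    intro p hp
    have h2 : 2 ≤ p := (Nat.prime_of_mem_primeFactors hp).two_le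
    have : (p:ℚ) ≥ 2 := by exact_mod_cast h2
    have : (p:ℚ)⁻¹ ≤ 1/2 := by
      rw [inv_eq_one_div, div_le_div_iff₀ (by linarith) (by norm_num)]
      linarith
    linarith
  have hprod : (14592/25725 : ℚ) ≤
      (∏ p ∈ m.primeFactors, (1 - (p:ℚ)⁻¹)) * ∏ p ∈ m.primeFactors, (1 + (p:ℚ)⁻¹) := by
    rw [← Finset.prod_mul_distrib]
    have : ∀ p ∈ m.primeFactors, (1 - (p:ℚ)⁻¹) * (1 + (p:ℚ)⁻¹) = 1 - 1/(p:ℚ)^2 := by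
      intro p hp
      have h2 : (0:ℚ) < p := by
        exact_mod_cast (Nat.prime_of_mem_primeFactors hp).pos
      field_simp
      ring
    rw [Finset.prod_congr rfl this]
    exact prime_prod_bound m
  calc (14592/25725 : ℚ) * (m:ℚ)^2
      ≤ ((∏ p ∈ m.primeFactors, (1 - (p:ℚ)⁻¹)) * ∏ p ∈ m.primeFactors, (1 + (p:ℚ)⁻¹)) * (m:ℚ)^2 := by
        have hm2 : (0:ℚ) ≤ (m:ℚ)^2 := by positivity
        nlinarith
  _ = (m * ∏ p ∈ m.primeFactors, (1 - (p:ℚ)⁻¹)) * ((m:ℚ) * ∏ p ∈ m.primeFactors, (1 + (p:ℚ)⁻¹)) := by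
        ring
  _ ≤ (m.totient : ℚ) * ∑ d ∈ m.divisors, (d:ℚ) := by
        rw [htot]
        apply mul_le_mul_of_nonneg_left hsig
        rw [← htot]
        positivity

lemma triple_split (S : Finset ℕ) (f g k : ℕ → ℚ) :
    ∑ a ∈ S, ∑ p ∈ S ×ˢ S, f a * (g p.1 * k p.2) =
      (∑ a ∈ S, f a) * ((∑ b ∈ S, g b) * (∑ c ∈ S, k c)) := by
  simp_rw [← Finset.mul_sum]
  rw [← Finset.sum_mul]
  congr 1
  rw [Finset.sum_product]
  simp_rw [← Finset.mul_sum]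
  rw [← Finset.sum_mul]

lemma lcm_sum_bound (B : ℕ) :
    ∑ p ∈ (Icc 1 B) ×ˢ (Icc 1 B), (1:ℚ)/(p.1 * p.2 * Nat.lcm p.1 p.2) ≤
      (65/54) * (6581/4000)^2 := by
  classical
  set P := (Icc 1 B) ×ˢ (Icc 1 B) with hP
  set F : ℕ × ℕ → ℕ × ℕ × ℕ := fun p => (Nat.gcd p.1 p.2, p.1 / Nat.gcd p.1 p.2, p.2 / Nat.gcd p.1 p.2) with hF
  set h : ℕ × ℕ × ℕ → ℚ := fun q => ((1:ℚ)/q.1^3) * (((1:ℚ)/q.2.1^2) * ((1:ℚ)/q.2.2^2)) with hh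
  have key : ∀ p ∈ P, (1:ℚ)/(p.1 * p.2 * Nat.lcm p.1 p.2) = h (F p) := by
    rintro ⟨d, e⟩ hp
    simp only [hP, Finset.mem_product, Finset.mem_Icc] at hp
    have hd : 0 < d := hp.1.1
    have he : 0 < e := hp.2.1
    obtain ⟨g, hg⟩ : ∃ g, Nat.gcd d e = g := ⟨_, rfl⟩
    have hgpos : 0 < g := hg ▸ Nat.gcd_pos_of_pos_left e hd
    obtain ⟨d', hd'⟩ : g ∣ d := hg ▸ Nat.gcd_dvd_left d e
    obtain ⟨e', he'⟩ : g ∣ e := hg ▸ Nat.gcd_dvd_right d e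
    have hd'pos : 0 < d' := by rcases Nat.eq_zero_or_pos d' with rfl | hpos; · omega
                               · exact hpos
    have he'pos : 0 < e' := by rcases Nat.eq_zero_or_pos e' with rfl | hpos; · omega
                               · exact hpos
    have hlcm : Nat.lcm d e = g * d' * e' := by
      have h1 : Nat.gcd d e * Nat.lcm d e = d * e := Nat.gcd_mul_lcm d e
      rw [hg] at h1
      have h2 : d * e = g * (g * d' * e') := by rw [hd', he']; ring
      rw [h2] at h1
      exact Nat.eq_of_mul_eq_mul_left hgpos h1
    have hfd' : d / g = d' := by rw [hd']; exact Nat.mul_div_cancel_left d' hgpos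
    have hfe' : e / g = e' := by rw [he']; exact Nat.mul_div_cancel_left e' hgpos
    have hnat : d * e * Nat.lcm d e = g^3 * d'^2 * e'^2 := by
      rw [hlcm, hd', he']; ring
    simp only [hF, hh, hg, hfd', hfe']
    have hcast : ((d:ℚ) * e * Nat.lcm d e) = ((g:ℚ)^3 * d'^2 * e'^2) := by
      exact_mod_cast congrArg (Nat.cast : ℕ → ℚ) hnat
    rw [hcast]
    have c1 : (0:ℚ) < g := by exact_mod_cast hgpos
    have c2 : (0:ℚ) < d' := by exact_mod_cast hd'pos
    have c3 : (0:ℚ) < e' := by exact_mod_cast he'pos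
    field_simp
  rw [Finset.sum_congr rfl key]
  have hinj : Set.InjOn F P := by
    rintro ⟨d1, e1⟩ h1 ⟨d2, e2⟩ h2 heq
    simp only [hP, Finset.coe_product, Set.mem_prod, Finset.mem_coe, Finset.mem_Icc] at h1 h2
    simp only [hF, Prod.mk.injEq] at heq
    obtain ⟨hg, hd, he⟩ := heq
    have r1 : d1 = Nat.gcd d1 e1 * (d1 / Nat.gcd d1 e1) :=
      (Nat.mul_div_cancel' (Nat.gcd_dvd_left d1 e1)).symm
    have r2 : d2 = Nat.gcd d2 e2 * (d2 / Nat.gcd d2 e2) :=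
      (Nat.mul_div_cancel' (Nat.gcd_dvd_left d2 e2)).symm
    have r3 : e1 = Nat.gcd d1 e1 * (e1 / Nat.gcd d1 e1) :=
      (Nat.mul_div_cancel' (Nat.gcd_dvd_right d1 e1)).symm
    have r4 : e2 = Nat.gcd d2 e2 * (e2 / Nat.gcd d2 e2) :=
      (Nat.mul_div_cancel' (Nat.gcd_dvd_right d2 e2)).symm
    have hdd : d1 = d2 := by rw [r1, hd, hg]; exact r2.symm
    have hee : e1 = e2 := by rw [r3, he, hg]; exact r4.symm
    simp only [Prod.mk.injEq]
    exact ⟨hdd, hee⟩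
  rw [← Finset.sum_image (fun p hp q hq hpq => hinj hp hq hpq)]
  have himg : P.image F ⊆ (Icc 1 B) ×ˢ ((Icc 1 B) ×ˢ (Icc 1 B)) := by
    intro q hq
    rw [Finset.mem_image] at hq
    obtain ⟨⟨d, e⟩, hp, rfl⟩ := hq
    simp only [hP, Finset.mem_product, Finset.mem_Icc] at hp
    have hd : 0 < d := hp.1.1
    have he : 0 < e := hp.2.1
    have hgpos : 0 < Nat.gcd d e := Nat.gcd_pos_of_pos_left e hd
    have hgle : Nat.gcd d e ≤ d := Nat.le_of_dvd hd (Nat.gcd_dvd_left d e)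
    have hdq : 0 < d / Nat.gcd d e := Nat.div_pos hgle hgpos
    have heq : 0 < e / Nat.gcd d e :=
      Nat.div_pos (Nat.le_of_dvd he (Nat.gcd_dvd_right d e)) hgpos
    simp only [hF, Finset.mem_product, Finset.mem_Icc]
    refine ⟨⟨hgpos, hgle.trans hp.1.2⟩, ⟨hdq, ?_⟩, heq, ?_⟩
    · exact (Nat.div_le_self _ _).trans hp.1.2
    · exact (Nat.div_le_self _ _).trans hp.2.2
  calc ∑ q ∈ P.image F, h q ≤ ∑ q ∈ (Icc 1 B) ×ˢ ((Icc 1 B) ×ˢ (Icc 1 B)), h q := by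
        apply Finset.sum_le_sum_of_subset_of_nonneg himg
        rintro ⟨g, d, e⟩ _ _
        simp only [hh]
        positivity
  _ = (∑ g ∈ Icc 1 B, (1:ℚ)/g^3) * ((∑ n ∈ Icc 1 B, (1:ℚ)/n^2) * (∑ n ∈ Icc 1 B, (1:ℚ)/n^2)) := by
        rw [Finset.sum_product]
        exact triple_split (Icc 1 B) (fun a => (1:ℚ)/a^3) (fun b => (1:ℚ)/b^2) (fun c => (1:ℚ)/c^2)
  _ ≤ (65/54) * (6581/4000)^2 := by
        have z2 := zeta2_bound B
        have z3 := zeta3_bound B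
        have nn2 : (0:ℚ) ≤ ∑ n ∈ Icc 1 B, (1:ℚ)/n^2 :=
          Finset.sum_nonneg fun n _ => by positivity
        have nn3 : (0:ℚ) ≤ ∑ n ∈ Icc 1 B, (1:ℚ)/n^3 :=
          Finset.sum_nonneg fun n _ => by positivity
        have hy : (∑ n ∈ Icc 1 B, (1:ℚ)/n^2) * (∑ n ∈ Icc 1 B, (1:ℚ)/n^2) ≤ (6581/4000)^2 := by
          nlinarith
        nlinarith

-- σ(m)/m = sum of reciprocals of divisors
lemma recip_div (m : ℕ) (hm : 0 < m) :
    ∑ d ∈ m.divisors, (1:ℚ)/d = (∑ d ∈ m.divisors, (d:ℚ)) / m := by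
  have h := Nat.sum_div_divisors m (fun d => (1:ℚ)/d)
  rw [← h]
  rw [Finset.sum_div]
  apply Finset.sum_congr rfl
  intro d hd
  obtain ⟨hdvd, hne⟩ := Nat.mem_divisors.mp hd
  have hdpos : 0 < d := Nat.pos_of_dvd_of_pos hdvd hm
  rw [Nat.cast_div hdvd (by exact_mod_cast hdpos.ne')]
  rw [one_div_div]

-- pointwise bound
lemma ratio_sq_le (m : ℕ) (hm : 0 < m) :
    ((m:ℚ)/m.totient)^2 ≤ (25725/14592)^2 * (∑ d ∈ m.divisors, (1:ℚ)/d)^2 := by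
  have hphi : 0 < m.totient := Nat.totient_pos.mpr hm
  have hphiQ : (0:ℚ) < m.totient := by exact_mod_cast hphi
  have hmQ : (0:ℚ) < m := by exact_mod_cast hm
  have hSnn : (0:ℚ) ≤ ∑ d ∈ m.divisors, (d:ℚ) :=
    Finset.sum_nonneg fun d _ => by positivity
  have h1 := key1 m hm
  have h3 : (m:ℚ)^2 ≤ (25725/14592) * ((m.totient:ℚ) * ∑ d ∈ m.divisors, (d:ℚ)) := by
    linarith
  have h2 : (m:ℚ)/m.totient ≤ (25725/14592) * ((∑ d ∈ m.divisors, (d:ℚ)) / m) := by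
    rw [mul_div_assoc'] at *
    rw [div_le_div_iff₀ hphiQ hmQ]
    nlinarith
  rw [recip_div m hm]
  have hnn : (0:ℚ) ≤ (m:ℚ)/m.totient := by positivity
  calc ((m:ℚ)/m.totient)^2 ≤ ((25725/14592) * ((∑ d ∈ m.divisors, (d:ℚ)) / m))^2 := by
        apply pow_le_pow_left₀ hnn h2
  _ = (25725/14592)^2 * ((∑ d ∈ m.divisors, (d:ℚ)) / m)^2 := by ring

lemma divisor_sum_ext (B m : ℕ) (hm : m ∈ Icc 1 B) (F : ℕ → ℚ) :
    ∑ d ∈ m.divisors, F d = ∑ d ∈ Icc 1 B, if d ∣ m then F d else 0 := by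
  rw [Finset.mem_Icc] at hm
  rw [← Finset.sum_filter]
  congr 1
  ext d
  simp only [Nat.mem_divisors, Finset.mem_filter, Finset.mem_Icc]
  constructor
  · rintro ⟨hdvd, hne⟩
    exact ⟨⟨Nat.pos_of_dvd_of_pos hdvd (by omega), (Nat.le_of_dvd (by omega) hdvd).trans hm.2⟩, hdvd⟩
  · rintro ⟨_, hdvd⟩
    exact ⟨hdvd, by omega⟩

lemma sum_divisor_sq_le (B : ℕ) :
    ∑ m ∈ Icc 1 B, (∑ d ∈ m.divisors, (1:ℚ)/d)^2 ≤ ((65/54) * (6581/4000)^2) * B := by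
  classical
  have step1 : ∀ m ∈ Icc 1 B, (∑ d ∈ m.divisors, (1:ℚ)/d)^2 =
      ∑ d ∈ Icc 1 B, ∑ e ∈ Icc 1 B,
        (if d ∣ m then (1:ℚ)/d else 0) * (if e ∣ m then (1:ℚ)/e else 0) := by
    intro m hm
    rw [sq, divisor_sum_ext B m hm, Finset.sum_mul_sum]
  rw [Finset.sum_congr rfl step1]
  rw [Finset.sum_comm]
  have step2 : ∀ d ∈ Icc 1 B, ∑ m ∈ Icc 1 B, ∑ e ∈ Icc 1 B,
      (if d ∣ m then (1:ℚ)/d else 0) * (if e ∣ m then (1:ℚ)/e else 0) =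
      ∑ e ∈ Icc 1 B, ∑ m ∈ Icc 1 B,
      (if d ∣ m then (1:ℚ)/d else 0) * (if e ∣ m then (1:ℚ)/e else 0) := by
    intro d _
    rw [Finset.sum_comm]
  rw [Finset.sum_congr rfl step2]
  have inner : ∀ d ∈ Icc 1 B, ∀ e ∈ Icc 1 B,
      ∑ m ∈ Icc 1 B, (if d ∣ m then (1:ℚ)/d else 0) * (if e ∣ m then (1:ℚ)/e else 0) ≤
      ((1:ℚ)/(d * e * Nat.lcm d e)) * B := by
    intro d hd e he
    rw [Finset.mem_Icc] at hd he
    have hdp : 0 < d := hd.1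
    have hep : 0 < e := he.1
    have hlp : 0 < Nat.lcm d e := Nat.pos_of_ne_zero (Nat.lcm_ne_zero (by omega) (by omega))
    have hite : ∀ m : ℕ, (if d ∣ m then (1:ℚ)/d else 0) * (if e ∣ m then (1:ℚ)/e else 0) =
        if Nat.lcm d e ∣ m then (1:ℚ)/(d*e) else 0 := by
      intro m
      by_cases h1 : d ∣ m <;> by_cases h2 : e ∣ m <;>
        simp [h1, h2, Nat.lcm_dvd_iff, one_div, mul_inv, mul_comm]
    simp_rw [hite]
    rw [← Finset.sum_filter, Finset.sum_const, nsmul_eq_mul]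
    have hcard : ((Icc 1 B).filter (fun m => Nat.lcm d e ∣ m)).card = B / Nat.lcm d e := by
      rw [show (Icc 1 B : Finset ℕ) = Ioc 0 B from Finset.Icc_add_one_left_eq_Ioc 0 B]
      exact Nat.Ioc_filter_dvd_card_eq_div B (Nat.lcm d e)
    rw [hcard]
    have hle : ((B / Nat.lcm d e : ℕ) : ℚ) ≤ (B:ℚ) / (Nat.lcm d e : ℚ) := Nat.cast_div_le
    have hde : (0:ℚ) < (d:ℚ) * e := by
      have : (0:ℚ) < (d:ℚ) := by exact_mod_cast hdp
      have : (0:ℚ) < (e:ℚ) := by exact_mod_cast hep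
      positivity
    have hlQ : (0:ℚ) < (Nat.lcm d e : ℚ) := by exact_mod_cast hlp
    calc ((B / Nat.lcm d e : ℕ) : ℚ) * (1/((d:ℚ)*e))
        ≤ ((B:ℚ) / (Nat.lcm d e : ℚ)) * (1/((d:ℚ)*e)) := by
          apply mul_le_mul_of_nonneg_right hle
          positivity
    _ = (1:ℚ)/((d:ℚ) * e * Nat.lcm d e) * B := by
          field_simp
  calc ∑ d ∈ Icc 1 B, ∑ e ∈ Icc 1 B, ∑ m ∈ Icc 1 B,
        (if d ∣ m then (1:ℚ)/d else 0) * (if e ∣ m then (1:ℚ)/e else 0)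
      ≤ ∑ d ∈ Icc 1 B, ∑ e ∈ Icc 1 B, ((1:ℚ)/(d * e * Nat.lcm d e)) * B := by
        apply Finset.sum_le_sum
        intro d hd
        apply Finset.sum_le_sum
        intro e he
        exact inner d hd e he
  _ = (∑ p ∈ (Icc 1 B) ×ˢ (Icc 1 B), (1:ℚ)/(p.1 * p.2 * Nat.lcm p.1 p.2)) * B := by
        rw [Finset.sum_product, Finset.sum_mul]
        apply Finset.sum_congr rfl
        intro d _
        rw [Finset.sum_mul]
  _ ≤ ((65/54) * (6581/4000)^2) * B := by
        apply mul_le_mul_of_nonneg_right (lcm_sum_bound B)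
        positivity

lemma key2 (B : ℕ) : ∑ m ∈ Icc 1 B, ((m:ℚ)/m.totient)^2 ≤ (51/5) * B := by
  calc ∑ m ∈ Icc 1 B, ((m:ℚ)/m.totient)^2
      ≤ ∑ m ∈ Icc 1 B, (25725/14592)^2 * (∑ d ∈ m.divisors, (1:ℚ)/d)^2 := by
        apply Finset.sum_le_sum
        intro m hm
        exact ratio_sq_le m (Finset.mem_Icc.mp hm).1
  _ = (25725/14592)^2 * ∑ m ∈ Icc 1 B, (∑ d ∈ m.divisors, (1:ℚ)/d)^2 := by
        rw [Finset.mul_sum]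
  _ ≤ (25725/14592)^2 * (((65/54) * (6581/4000)^2) * B) := by
        apply mul_le_mul_of_nonneg_left (sum_divisor_sq_le B)
        positivity
  _ ≤ (51/5) * B := by
        have hB : (0:ℚ) ≤ B := by positivity
        nlinarith

lemma geom_half (J : ℕ) : ∑ j ∈ range J, ((1:ℚ)/2)^j ≤ 2 := by
  rw [geom_sum_eq (show (1/2:ℚ) ≠ 1 by norm_num)]
  have h1 : (0:ℚ) ≤ (1/2:ℚ)^J := by positivity
  have h2 : ((1/2:ℚ)^J - 1)/((1/2:ℚ) - 1) = 2 - 2*(1/2:ℚ)^J := by ring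
  rw [h2]
  linarith

-- block bound : number of m in a dyadic block with small totient
lemma block_bound (D j : ℕ) (hD : 0 < D) :
    (((Ioc (2^(j+1)*D) (2^(j+2)*D)).filter (fun m => m.totient ≤ D)).card : ℚ) * 4^(j+1)
      ≤ (51/5) * (2^(j+2)*D) := by
  set s := (Ioc (2^(j+1)*D) (2^(j+2)*D)).filter (fun m => m.totient ≤ D) with hs
  have hlow : ∀ m ∈ s, (4:ℚ)^(j+1) ≤ ((m:ℚ)/m.totient)^2 := by
    intro m hm
    simp only [hs, Finset.mem_filter, Finset.mem_Ioc] at hm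
    obtain ⟨⟨hm1, hm2⟩, hphi⟩ := hm
    have hmpos : 0 < m := lt_of_le_of_lt (Nat.zero_le _) hm1
    have hphip : 0 < m.totient := Nat.totient_pos.mpr hmpos
    have hDQ : (0:ℚ) < D := by exact_mod_cast hD
    have hphiQ : (0:ℚ) < m.totient := by exact_mod_cast hphip
    have h1 : ((2:ℚ)^(j+1) * D) ≤ (m:ℚ) := by
      have : (2^(j+1)*D : ℕ) ≤ m := le_of_lt hm1
      exact_mod_cast this
    have h2 : (m:ℚ)/D ≤ (m:ℚ)/m.totient := by
      apply div_le_div_of_nonneg_left (by positivity) hphiQ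
      exact_mod_cast hphi
    have h3 : (2:ℚ)^(j+1) ≤ (m:ℚ)/D := by
      rw [le_div_iff₀ hDQ]
      linarith
    have h4 : (2:ℚ)^(j+1) ≤ (m:ℚ)/m.totient := le_trans h3 h2
    calc (4:ℚ)^(j+1) = ((2:ℚ)^(j+1))^2 := by
          rw [show (4:ℚ) = 2^2 from by norm_num, ← pow_mul, ← pow_mul, mul_comm]
    _ ≤ ((m:ℚ)/m.totient)^2 := by
          apply pow_le_pow_left₀ (by positivity) h4
  have hsub : s ⊆ Icc 1 (2^(j+2)*D) := by
    intro m hm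
    simp only [hs, Finset.mem_filter, Finset.mem_Ioc] at hm
    rw [Finset.mem_Icc]
    have := hm.1.1
    have := hm.1.2
    constructor
    · have : 0 < 2^(j+1)*D := by positivity
      omega
    · omega
  calc (s.card : ℚ) * 4^(j+1) = ∑ _m ∈ s, (4:ℚ)^(j+1) := by
        rw [Finset.sum_const, nsmul_eq_mul]
  _ ≤ ∑ m ∈ s, ((m:ℚ)/m.totient)^2 := Finset.sum_le_sum hlow
  _ ≤ ∑ m ∈ Icc 1 (2^(j+2)*D), ((m:ℚ)/m.totient)^2 := by
        apply Finset.sum_le_sum_of_subset_of_nonneg hsub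
        intro m _ _
        positivity
  _ ≤ (51/5) * (2^(j+2)*D) := by
        have := key2 (2^(j+2)*D)
        calc ∑ m ∈ Icc 1 (2^(j+2)*D), ((m:ℚ)/m.totient)^2
            ≤ (51/5) * ((2^(j+2)*D : ℕ) : ℚ) := key2 (2^(j+2)*D)
        _ = (51/5) * (2^(j+2)*D) := by push_cast; ring

lemma pow_ratio (j : ℕ) : (2:ℚ)^(j+2)/4^(j+1) = (1/2)^j := by
  induction j with
  | zero => norm_num
  | succ j ih =>
    have e1 : (2:ℚ)^(j+1+2) = 2^(j+2)*2 := by ring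
    have e2 : (4:ℚ)^(j+1+1) = 4^(j+1)*4 := by ring
    rw [e1, e2]
    conv_rhs => rw [pow_succ]
    rw [← ih]
    field_simp
    ring

lemma find_block (D m : ℕ) (hgt : 2*D < m) (hle : m ≤ 2*D^2) :
    ∃ j, j < D ∧ 2^(j+1)*D < m ∧ m ≤ 2^(j+2)*D := by
  have hPD : ¬ (2^(D+1)*D < m) := by
    have h1 : D ≤ 2^D := (Nat.lt_two_pow_self (n := D)).le
    have : 2*D^2 ≤ 2^(D+1)*D := by
      calc 2*D^2 = 2*D*D := by ring
      _ ≤ 2*D*2^D := Nat.mul_le_mul_left _ h1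
      _ = 2^(D+1)*D := by ring
    omega
  have hP0 : 2^(0+1)*D < m := by simpa using hgt
  set P : ℕ → Prop := fun k => 2^(k+1)*D < m with hP
  have hjD : Nat.findGreatest P D ≤ D := Nat.findGreatest_le D
  have hPj : P (Nat.findGreatest P D) := Nat.findGreatest_spec (Nat.zero_le D) hP0
  have hjlt : Nat.findGreatest P D < D := by
    rcases Nat.lt_or_ge (Nat.findGreatest P D) D with h | h
    · exact h
    · exfalso
      have heq : Nat.findGreatest P D = D := le_antisymm hjD h
      rw [heq] at hPj
      exact hPD hPj
  have hnPj1 : ¬ P (Nat.findGreatest P D + 1) :=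
    Nat.findGreatest_is_greatest (Nat.lt_succ_self _) (by omega)
  refine ⟨Nat.findGreatest P D, hjlt, hPj, ?_⟩
  simp only [hP, not_lt] at hnPj1
  calc m ≤ 2^(Nat.findGreatest P D + 1 + 1)*D := hnPj1
  _ = 2^(Nat.findGreatest P D + 2)*D := by ring_nf

lemma numeric_bound (D : ℕ) (hD : 0 < D) :
    ∑ m ∈ (Finset.Icc 1 (2*D^2)).filter (fun m => m.totient ≤ D), m.totient ≤ 23 * D^2 := by
  classical
  set M := (Finset.Icc 1 (2*D^2)).filter (fun m => m.totient ≤ D) with hM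
  set bl : ℕ → Finset ℕ := fun j => (Ioc (2^(j+1)*D) (2^(j+2)*D)).filter (fun m => m.totient ≤ D)
    with hbl
  rw [← Finset.sum_filter_add_sum_filter_not M (fun m => m ≤ 2*D)]
  have hA : ∑ m ∈ M.filter (fun m => m ≤ 2*D), m.totient ≤ 2*D^2 := by
    have hcard : (M.filter (fun m => m ≤ 2*D)).card ≤ 2*D := by
      have hsub : M.filter (fun m => m ≤ 2*D) ⊆ Icc 1 (2*D) := by
        intro m hm
        simp only [hM, Finset.mem_filter, Finset.mem_Icc] at hm
        rw [Finset.mem_Icc]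
        exact ⟨hm.1.1.1, hm.2⟩
      calc (M.filter (fun m => m ≤ 2*D)).card ≤ (Icc 1 (2*D)).card := Finset.card_le_card hsub
      _ = 2*D := by rw [Nat.card_Icc]; omega
    calc ∑ m ∈ M.filter (fun m => m ≤ 2*D), m.totient
        ≤ ∑ _m ∈ M.filter (fun m => m ≤ 2*D), D := by
          apply Finset.sum_le_sum
          intro m hm
          simp only [hM, Finset.mem_filter] at hm
          exact hm.1.2
    _ = (M.filter (fun m => m ≤ 2*D)).card * D := by rw [Finset.sum_const, smul_eq_mul]
    _ ≤ 2*D*D := Nat.mul_le_mul_right D hcard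
    _ = 2*D^2 := by ring
  have hsubB : M.filter (fun m => ¬ m ≤ 2*D) ⊆ (range D).biUnion bl := by
    intro m hm
    simp only [hM, Finset.mem_filter, Finset.mem_Icc, not_le] at hm
    obtain ⟨⟨⟨hm1, hm2⟩, hphi⟩, hgt⟩ := hm
    obtain ⟨j, hjlt, hj1, hj2⟩ := find_block D m hgt hm2
    rw [Finset.mem_biUnion]
    refine ⟨j, Finset.mem_range.mpr hjlt, ?_⟩
    simp only [hbl, Finset.mem_filter, Finset.mem_Ioc]
    exact ⟨⟨hj1, hj2⟩, hphi⟩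
  have hdisj : (↑(range D) : Set ℕ).PairwiseDisjoint bl := by
    intro i _ j _ hij
    rw [Function.onFun, Finset.disjoint_left]
    intro m hmi hmj
    simp only [hbl, Finset.mem_filter, Finset.mem_Ioc] at hmi hmj
    rcases Nat.lt_or_ge i j with h | h
    · have : 2^(i+2) ≤ 2^(j+1) := Nat.pow_le_pow_right (by norm_num) (by omega)
      have h2 : 2^(i+2)*D ≤ 2^(j+1)*D := Nat.mul_le_mul_right D this
      omega
    · have hji : j < i := by omega
      have : 2^(j+2) ≤ 2^(i+1) := Nat.pow_le_pow_right (by norm_num) (by omega)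
      have h2 : 2^(j+2)*D ≤ 2^(i+1)*D := Nat.mul_le_mul_right D this
      omega
  have hB : ∑ m ∈ M.filter (fun m => ¬ m ≤ 2*D), m.totient ≤
      ∑ j ∈ range D, ∑ m ∈ bl j, m.totient := by
    rw [← Finset.sum_biUnion hdisj]
    apply Finset.sum_le_sum_of_subset hsubB
  have hblock : ∀ j ∈ range D, ∑ m ∈ bl j, (m.totient : ℚ) ≤ (51/5)*(D:ℚ)^2*(1/2)^j := by
    intro j _
    have h1 : ∑ m ∈ bl j, (m.totient : ℚ) ≤ (D:ℚ) * ((bl j).card : ℚ) := by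
      calc ∑ m ∈ bl j, (m.totient : ℚ) ≤ ∑ _m ∈ bl j, (D:ℚ) := by
            apply Finset.sum_le_sum
            intro m hm
            simp only [hbl, Finset.mem_filter] at hm
            exact_mod_cast hm.2
      _ = ((bl j).card : ℚ) * D := by rw [Finset.sum_const, nsmul_eq_mul]
      _ = (D:ℚ) * ((bl j).card : ℚ) := by ring
    have h2 := block_bound D j hD
    have h4pos : (0:ℚ) < 4^(j+1) := by positivity
    have hcardQ : ((bl j).card : ℚ) ≤ (51/5) * (2^(j+2)*D) / 4^(j+1) := by
      rw [le_div_iff₀ h4pos]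
      exact h2
    calc ∑ m ∈ bl j, (m.totient : ℚ) ≤ (D:ℚ) * ((bl j).card : ℚ) := h1
    _ ≤ (D:ℚ) * ((51/5) * (2^(j+2)*D) / 4^(j+1)) := by
          apply mul_le_mul_of_nonneg_left hcardQ
          positivity
    _ = (51/5)*(D:ℚ)^2*((2:ℚ)^(j+2)/4^(j+1)) := by ring
    _ = (51/5)*(D:ℚ)^2*(1/2)^j := by rw [pow_ratio]
  have hBQ : ((∑ j ∈ range D, ∑ m ∈ bl j, m.totient : ℕ) : ℚ) ≤ (102/5) * (D:ℚ)^2 := by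
    push_cast
    calc ∑ j ∈ range D, ∑ m ∈ bl j, (m.totient:ℚ)
        ≤ ∑ j ∈ range D, (51/5)*(D:ℚ)^2*(1/2)^j := Finset.sum_le_sum hblock
    _ = (51/5)*(D:ℚ)^2 * ∑ j ∈ range D, ((1:ℚ)/2)^j := by rw [Finset.mul_sum]
    _ ≤ (51/5)*(D:ℚ)^2 * 2 := by
          apply mul_le_mul_of_nonneg_left (geom_half D)
          positivity
    _ = (102/5) * (D:ℚ)^2 := by ring
  have hBn : ∑ m ∈ M.filter (fun m => ¬ m ≤ 2*D), m.totient ≤ 21 * D^2 := by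
    have h1 : ((∑ m ∈ M.filter (fun m => ¬ m ≤ 2*D), m.totient : ℕ) : ℚ) ≤ (102/5) * (D:ℚ)^2 :=
      le_trans (by exact_mod_cast hB) hBQ
    have h2 : ((102:ℚ)/5) * (D:ℚ)^2 ≤ ((21 * D^2 : ℕ) : ℚ) := by
      push_cast
      nlinarith [sq_nonneg (D:ℚ)]
    exact_mod_cast le_trans h1 h2
  omega

end CountHelpers

/-- **Lemma (counting roots of unity of bounded degree).** For every positive integer
$D$, the number of roots of unity whose degree over $ℚ$ is at most $D$ is at most
$23 D^2$. -/
theorem count_roots_of_unity_of_bounded_degree (D : ℕ) (hD : 0 < D) :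
    {α : ℂ | IsRootOfUnity α ∧ (minpoly ℚ α).natDegree ≤ D}.Finite ∧
    {α : ℂ | IsRootOfUnity α ∧ (minpoly ℚ α).natDegree ≤ D}.ncard ≤ 23 * D ^ 2 := by
  set M : Finset ℕ := (Finset.Icc 1 (2*D^2)).filter (fun m => m.totient ≤ D) with hM
  set F : Finset ℂ := M.biUnion (fun m => primitiveRoots m ℂ) with hF
  have hsub : {α : ℂ | IsRootOfUnity α ∧ (minpoly ℚ α).natDegree ≤ D} ⊆ ↑F := by
    rintro α ⟨⟨n, hn, hpow⟩, hdeg⟩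
    have hfin : IsOfFinOrder α := isOfFinOrder_iff_pow_eq_one.mpr ⟨n, hn, hpow⟩
    have hm : 0 < orderOf α := hfin.orderOf_pos
    have hprim : IsPrimitiveRoot α (orderOf α) := IsPrimitiveRoot.orderOf α
    have hmin : cyclotomic (orderOf α) ℚ = minpoly ℚ α :=
      cyclotomic_eq_minpoly_rat hprim hm
    have hphi : (orderOf α).totient ≤ D := by
      rw [← hmin, natDegree_cyclotomic] at hdeg
      exact hdeg
    have hm2 : orderOf α ≤ 2 * D^2 := by
      have h1 := order_le (orderOf α)
      have h2 : (orderOf α).totient ^ 2 ≤ D ^ 2 := Nat.pow_le_pow_left hphi 2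
      omega
    refine Finset.mem_coe.mpr (Finset.mem_biUnion.mpr ?_)
    exact ⟨orderOf α, by simp [hM, Finset.mem_filter, Finset.mem_Icc, Nat.one_le_iff_ne_zero.mpr hm.ne', hm2, hphi],
      (mem_primitiveRoots hm).2 hprim⟩
  constructor
  · exact Set.Finite.subset F.finite_toSet hsub
  · calc {α : ℂ | IsRootOfUnity α ∧ (minpoly ℚ α).natDegree ≤ D}.ncard
        ≤ (↑F : Set ℂ).ncard := Set.ncard_le_ncard hsub F.finite_toSet
    _ = F.card := Set.ncard_coe_finset F
    _ ≤ ∑ m ∈ M, (primitiveRoots m ℂ).card := Finset.card_biUnion_le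
    _ = ∑ m ∈ M, m.totient := by
        refine Finset.sum_congr rfl fun m hm => ?_
        exact Complex.card_primitiveRoots m
    _ ≤ 23 * D^2 := numeric_bound D hD

end
end
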